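/- arXiv:2004.01140 — 4 statements merged into one kernel-verified Lean document; each statement's English description precedes it below -/
import Mathlib

section
/- Let n = d·m with d, m positive integers, and let χ be any function from the set of integer partitions of n to the complex numbers. In the field of rational functions ℂ(q), set F(q) = (∏_{j=1}^{n} (1 − q^j)) · Σ_{ν ⊢ n} (χ(ν)/z_ν) · ∏_{i=1}^{ℓ(ν)} (1 − q^{ν_i})^{−1}, where for a partition ν, z_ν = ∏_j m_j!·j^{m_j} with m_j the number of parts of ν equal to j, and ℓ(ν) is the number of parts of ν. Suppose F(q) is (equal in ℂ(q) to) a polynomial f(q) with integer coefficients. Then for ξ = exp(2πi/n) a primitive n-th root of unity, f(ξ^d) = χ((m^d)), where (m^d) denotes the partition of n having d parts all equal to m. -/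
open Finset Polynomial

namespace CharAux

/-- factor of `1 - X^j` after removing powers of `1 - X^m`. -/
noncomputable def g (m j : ℕ) : Polynomial ℂ :=
  if m ∣ j then ∑ i ∈ Finset.range (j / m), ((X : Polynomial ℂ) ^ m) ^ i else 1 - X ^ j
variable {m : ℕ}

lemma g_spec (hm : 0 < m) (j : ℕ) :
    (1 - X ^ j : Polynomial ℂ) =
      (if m ∣ j then (1 - X ^ m : Polynomial ℂ) else 1) * g m j := by
  unfold g
  by_cases h : m ∣ j
  · obtain ⟨k, rfl⟩ := h
    simp only [if_pos (dvd_mul_right m k)]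
    rw [Nat.mul_div_cancel_left k hm, pow_mul]
    linear_combination mul_geom_sum ((X : Polynomial ℂ) ^ m) k
  · simp [h]

lemma prod_factor (hm : 0 < m) (s : Multiset ℕ) :
    (s.map (fun j => (1 - X ^ j : Polynomial ℂ))).prod =
      (1 - X ^ m : Polynomial ℂ) ^ (s.countP (m ∣ ·)) * (s.map (g m)).prod := by
  induction s using Multiset.induction with
  | empty => simp
  | cons a s ih =>
    simp only [Multiset.map_cons, Multiset.prod_cons, Multiset.countP_cons, ih,
      g_spec hm a]
    by_cases h : m ∣ a <;> simp [h, pow_add] <;> ring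

lemma count_dvd_Icc (hm : 0 < m) (d : ℕ) :
    (Multiset.countP (m ∣ ·) (Finset.Icc 1 (d * m)).val) = d := by
  rw [Multiset.countP_eq_card_filter]
  have h1 : (Finset.Icc 1 (d * m)).val.filter (m ∣ ·)
      = ((Finset.Icc 1 (d * m)).filter (m ∣ ·)).val := rfl
  rw [h1, ← Finset.card_def]
  rw [show Finset.Icc 1 (d * m) = Finset.Ioc 0 (d * m) from (Finset.Icc_add_one_left_eq_Ioc 0 (d * m))]
  rw [Nat.Ioc_filter_dvd_card_eq_div, Nat.mul_div_cancel d hm]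

lemma eval_g_of_dvd {ζ : ℂ} (hζ : ζ ^ m = 1) {j : ℕ} (hj : m ∣ j) :
    Polynomial.eval ζ (g m j) = ((j / m : ℕ) : ℂ) := by
  simp [g, hj, eval_finset_sum, hζ]

lemma eval_g_of_not_dvd (ζ : ℂ) {j : ℕ} (hj : ¬ m ∣ j) :
    Polynomial.eval ζ (g m j) = 1 - ζ ^ j := by
  simp [g, hj]

lemma eval_g_ne_zero (hm : 0 < m) {ζ : ℂ} (hζ : IsPrimitiveRoot ζ m) {j : ℕ} (hj : 0 < j) :
    Polynomial.eval ζ (g m j) ≠ 0 := by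
  by_cases h : m ∣ j
  · rw [eval_g_of_dvd hζ.pow_eq_one h]
    exact_mod_cast Nat.cast_ne_zero.2 (Nat.div_pos (Nat.le_of_dvd hj h) hm).ne'
  · rw [eval_g_of_not_dvd ζ h]
    intro h0
    have h1 : ζ ^ j = 1 := by linear_combination -h0
    exact h ((hζ.pow_eq_one_iff_dvd j).mp h1)

lemma periodic_mul (G : ℕ → ℂ) (hG : ∀ j, G (j + m) = G j) (k j : ℕ) :
    G (j + k * m) = G j := by
  induction k with
  | zero => simp
  | succ k ih => rw [add_mul, one_mul, ← add_assoc, hG, ih]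

lemma prod_periodic (G : ℕ → ℂ) (hG : ∀ j, G (j + m) = G j) (d : ℕ) :
    ∏ j ∈ Finset.Ioc 0 (d * m), G j = (∏ j ∈ Finset.Ioc 0 m, G j) ^ d := by
  induction d with
  | zero => simp
  | succ d ih =>
    have h1 : d * m ≤ (d + 1) * m := by nlinarith
    rw [← Finset.prod_Ioc_consecutive G (Nat.zero_le (d * m)) h1, ih, pow_succ]
    congr 1
    have h2 : Finset.Ioc (d * m) ((d + 1) * m) = (Finset.Ioc 0 m).map
        (addLeftEmbedding (d * m)) := by
      rw [Finset.map_add_left_Ioc]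
      simp [add_mul, one_mul]
    rw [h2, Finset.prod_map]
    refine Finset.prod_congr rfl fun j _ => ?_
    simp only [addLeftEmbedding_apply]
    rw [add_comm, periodic_mul G hG]

lemma prod_Ioc_one_sub (hm : 0 < m) {ζ : ℂ} (hζ : IsPrimitiveRoot ζ m) :
    ∏ j ∈ Finset.Ioc 0 m, (if m ∣ j then 1 else 1 - ζ ^ j) = (m : ℂ) := by
  obtain ⟨m', rfl⟩ : ∃ m', m = m' + 1 := ⟨m - 1, (Nat.succ_pred_eq_of_pos hm).symm⟩
  rw [Finset.prod_Ioc_succ_top (Nat.zero_le m')]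
  rw [if_pos (dvd_refl _), mul_one]
  have h1 : ∀ j ∈ Finset.Ioc 0 m', (if m' + 1 ∣ j then (1 : ℂ) else 1 - ζ ^ j) = 1 - ζ ^ j := by
    intro j hj
    rw [Finset.mem_Ioc] at hj
    rw [if_neg]
    intro hdvd
    exact absurd (Nat.le_of_dvd hj.1 hdvd) (by omega)
  rw [Finset.prod_congr rfl h1]
  have h2 : Finset.Ioc 0 m' = Finset.Ico 1 (m' + 1) := by
    rw [Finset.Ico_add_one_right_eq_Icc, ← Finset.Icc_add_one_left_eq_Ioc, zero_add]
  rw [h2, Finset.prod_Ico_eq_prod_range]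
  simp only [Nat.add_sub_cancel]
  have h3 := hζ.prod_one_sub_pow_eq_order
  push_cast
  rw [← h3]
  exact Finset.prod_congr rfl fun k _ => by rw [add_comm]
  
lemma eval_A (hm : 0 < m) {ζ : ℂ} (hζ : IsPrimitiveRoot ζ m) (d : ℕ) :
    Polynomial.eval ζ (((Finset.Icc 1 (d * m)).val.map (g m)).prod)
      = (d.factorial : ℂ) * (m : ℂ) ^ d := by
  rw [← Finset.prod_eq_multiset_prod, Polynomial.eval_prod]
  have hsplit : ∀ j ∈ Finset.Icc 1 (d * m), Polynomial.eval ζ (g m j)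
      = (if m ∣ j then ((j / m : ℕ) : ℂ) else 1) * (if m ∣ j then 1 else 1 - ζ ^ j) := by
    intro j _
    by_cases h : m ∣ j
    · simp [eval_g_of_dvd hζ.pow_eq_one h, h]
    · simp [eval_g_of_not_dvd ζ h, h]
  rw [Finset.prod_congr rfl hsplit, Finset.prod_mul_distrib]
  congr 1
  · -- first factor = d!
    rw [← Finset.prod_filter]
    have himg : (Finset.Icc 1 (d * m)).filter (m ∣ ·) = (Finset.Icc 1 d).image (· * m) := by
      ext j
      simp only [Finset.mem_filter, Finset.mem_image, Finset.mem_Icc]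
      constructor
      · rintro ⟨⟨h1, h2⟩, k, rfl⟩
        refine ⟨k, ⟨?_, ?_⟩, (mul_comm m k).symm⟩
        · rcases Nat.eq_zero_or_pos k with hk | hk
          · subst hk; omega
          · exact hk
        · have : m * k ≤ m * d := by rw [mul_comm m d]; exact h2
          exact Nat.le_of_mul_le_mul_left this hm
      · rintro ⟨k, ⟨hk1, hk2⟩, rfl⟩
        refine ⟨⟨?_, ?_⟩, dvd_mul_left m k⟩
        · exact Nat.one_le_iff_ne_zero.mpr (Nat.mul_ne_zero (by omega) (by omega))
        · exact Nat.mul_le_mul_right m hk2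
    rw [himg, Finset.prod_image (fun a _ b _ hab => Nat.eq_of_mul_eq_mul_right hm hab)]
    have : ∀ k ∈ Finset.Icc 1 d, (((k * m) / m : ℕ) : ℂ) = (k : ℕ) := by
      intro k _
      rw [Nat.mul_div_cancel _ hm]
    rw [Finset.prod_congr rfl this, ← Nat.cast_prod]
    congr 1
    rw [← Finset.Ico_add_one_right_eq_Icc, Finset.prod_Ico_id_eq_factorial]
  · -- second = m^d
    rw [show Finset.Icc 1 (d * m) = Finset.Ioc 0 (d * m) from (Finset.Icc_add_one_left_eq_Ioc 0 (d * m))]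
    have hG : ∀ j, (if m ∣ j + m then (1:ℂ) else 1 - ζ ^ (j + m))
        = (if m ∣ j then (1:ℂ) else 1 - ζ ^ j) := by
      intro j
      simp only [Nat.dvd_add_self_right, pow_add, hζ.pow_eq_one, mul_one]
    rw [prod_periodic _ hG, prod_Ioc_one_sub hm hζ]
lemma filter_sum_bound {m d n : ℕ} (hm : 0 < m) (hn : n = d * m) (ν : Nat.Partition n) :
    ν.parts.countP (m ∣ ·) ≤ d := by
  set t := ν.parts.filter (m ∣ ·) with ht
  have h1 : Multiset.card t • m ≤ t.sum := by
    refine Multiset.card_nsmul_le_sum fun x hx => ?_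
    rw [ht, Multiset.mem_filter] at hx
    exact Nat.le_of_dvd (ν.parts_pos hx.1) hx.2
  have h2 : t.sum ≤ n := by
    obtain ⟨u, hu⟩ := Multiset.le_iff_exists_add.mp (ν.parts.filter_le (m ∣ ·))
    calc t.sum ≤ t.sum + u.sum := Nat.le_add_right _ _
      _ = ν.parts.sum := by rw [hu, Multiset.sum_add]
      _ = n := ν.parts_sum
  rw [Multiset.countP_eq_card_filter, ← ht]
  have h3 : Multiset.card t * m ≤ d * m := by
    rw [← smul_eq_mul]
    exact le_trans h1 (by omega)
  exact Nat.le_of_mul_le_mul_right h3 hm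

lemma parts_eq_replicate_of_countP {m d n : ℕ} (hm : 0 < m) (hn : n = d * m)
    (ν : Nat.Partition n) (he : ν.parts.countP (m ∣ ·) = d) :
    ν.parts = Multiset.replicate d m := by
  set t := ν.parts.filter (m ∣ ·) with ht
  have hcard : Multiset.card t = d := by
    rw [ht, ← Multiset.countP_eq_card_filter]; exact he
  have h1 : Multiset.card t • m ≤ t.sum := by
    refine Multiset.card_nsmul_le_sum fun x hx => ?_
    rw [ht, Multiset.mem_filter] at hx
    exact Nat.le_of_dvd (ν.parts_pos hx.1) hx.2
  obtain ⟨u, hu⟩ := Multiset.le_iff_exists_add.mp (ν.parts.filter_le (m ∣ ·))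
  have hsum : t.sum + u.sum = n := by rw [← Multiset.sum_add, ← hu, ν.parts_sum]
  have htsum : t.sum = n := by
    have : d * m ≤ t.sum := by
      have := h1; rw [hcard, smul_eq_mul] at this; exact this
    omega
  have hu0 : u = 0 := by
    have husum : u.sum = 0 := by omega
    rw [Multiset.eq_zero_iff_forall_notMem]
    intro x hx
    have hxp : 0 < x := ν.parts_pos (by rw [hu]; exact Multiset.mem_add.mpr (Or.inr hx))
    have := Multiset.single_le_sum (fun y _ => Nat.zero_le y) x hx
    omega
  have hparts : ν.parts = t := by rw [hu, hu0, add_zero]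
  -- now each part equals m
  rw [Multiset.eq_replicate]
  constructor
  · rw [hparts, hcard]
  · intro b hb
    by_contra hbm
    have hbd : m ∣ b := by
      have : b ∈ t := by rw [← hparts]; exact hb
      rw [ht, Multiset.mem_filter] at this
      exact this.2
    have hbge : m + 1 ≤ b := by
      have := Nat.le_of_dvd (ν.parts_pos hb) hbd
      omega
    have herase : b + (ν.parts.erase b).sum = ν.parts.sum :=
      Multiset.sum_erase hb
    have hcarde : Multiset.card (ν.parts.erase b) = d - 1 := by
      rw [Multiset.card_erase_of_mem hb, hparts, hcard]; rfl
    have h2 : Multiset.card (ν.parts.erase b) • m ≤ (ν.parts.erase b).sum := by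
      refine Multiset.card_nsmul_le_sum fun x hx => ?_
      have hx' : x ∈ ν.parts := Multiset.mem_of_mem_erase hx
      have : x ∈ t := by rw [← hparts]; exact hx'
      rw [ht, Multiset.mem_filter] at this
      exact Nat.le_of_dvd (ν.parts_pos hx') this.2
    have hd1 : 1 ≤ d := by
      by_contra hd0
      have : d = 0 := by omega
      subst this
      have : Multiset.card ν.parts = 0 := by rw [hparts, hcard]
      rw [Multiset.card_eq_zero] at this
      rw [this] at hb
      exact absurd hb (Multiset.notMem_zero b)
    obtain ⟨d', rfl⟩ : ∃ d', d = d' + 1 := ⟨d - 1, by omega⟩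
    rw [hcarde, smul_eq_mul] at h2
    have h4 := ν.parts_sum
    have h6 : m + 1 + d' * m ≤ b + (ν.parts.erase b).sum := add_le_add hbge h2
    rw [herase, h4, hn] at h6
    have h7 : (d' + 1) * m = d' * m + m := by ring
    rw [h7] at h6
    omega

end CharAux

/-- The quantity `z_ν = ∏_j m_j! · j^{m_j}`, where `m_j` is the number of parts of `ν`
equal to `j`, as a complex number. -/
noncomputable def zPartition {n : ℕ} (ν : Nat.Partition n) : ℂ :=
  ((∏ j ∈ ν.parts.toFinset,
      (ν.parts.count j).factorial * j ^ ν.parts.count j : ℕ) : ℂ)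

/-- Let `n = d·m` and let `χ` be any complex-valued function on the
partitions of `n`.  If, in `ℂ(q)`,
`(∏_{j=1}^n (1 − q^j)) · Σ_{ν ⊢ n} (χ(ν)/z_ν) · ∏_i (1 − q^{ν_i})⁻¹`
equals a polynomial `f` with integer coefficients, then `f(ξ^d) = χ((m^d))` for
`ξ = exp(2πi/n)`. -/
theorem character_value_from_principal_specialization
    (n d m : ℕ) (hd : 0 < d) (hm : 0 < m) (hn : n = d * m)
    (χ : Nat.Partition n → ℂ) (f : Polynomial ℤ)
    (hf : (∏ j ∈ Finset.Icc 1 n, (1 - RatFunc.X ^ j : RatFunc ℂ)) *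
        ∑ ν : Nat.Partition n,
          RatFunc.C (χ ν / zPartition ν) *
            ((ν.parts.map fun i => ((1 : RatFunc ℂ) - RatFunc.X ^ i)⁻¹).prod)
      = algebraMap (Polynomial ℂ) (RatFunc ℂ) (f.map (Int.castRingHom ℂ)))
    (ξ : ℂ) (hξ : ξ = Complex.exp (2 * Real.pi * Complex.I / n)) :
    ∀ ν : Nat.Partition n, ν.parts = Multiset.replicate d m →
      Polynomial.eval (ξ ^ d) (f.map (Int.castRingHom ℂ)) = χ ν := by
  classical
  intro ν₀ hν₀
  have hn0 : 0 < n := hn ▸ Nat.mul_pos hd hm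
  have hξprim : IsPrimitiveRoot ξ n := by
    rw [hξ]; exact Complex.isPrimitiveRoot_exp n hn0.ne'
  have hζ : IsPrimitiveRoot (ξ ^ d) m := hξprim.pow hn0 hn
  subst hn
  set ζ := ξ ^ d with hζdef
  set φ := algebraMap (Polynomial ℂ) (RatFunc ℂ) with hφ
  have hφinj : Function.Injective φ := RatFunc.algebraMap_injective ℂ
  set c : Nat.Partition (d * m) → ℂ := fun ν => χ ν / zPartition ν with hc
  set A : Polynomial ℂ := ((Finset.Icc 1 (d * m)).val.map (CharAux.g m)).prod with hA
  set B : Nat.Partition (d * m) → Polynomial ℂ :=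
    fun ν => (ν.parts.map (CharAux.g m)).prod with hB
  set e : Nat.Partition (d * m) → ℕ := fun ν => ν.parts.countP (m ∣ ·) with he
  set D : Nat.Partition (d * m) → Polynomial ℂ :=
    fun ν => (ν.parts.map fun j => (1 - X ^ j : Polynomial ℂ)).prod with hD
  set W : Polynomial ℂ := ∏ μ : Nat.Partition (d * m), B μ with hW
  set E : Nat.Partition (d * m) → Polynomial ℂ :=
    fun ν => (1 - X ^ m : Polynomial ℂ) ^ (d - e ν) * A *
      ∏ μ ∈ Finset.univ.erase ν, B μ with hE
  set fC : Polynomial ℂ := f.map (Int.castRingHom ℂ) with hfC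
  set Np : Polynomial ℂ := ∏ j ∈ Finset.Icc 1 (d * m), (1 - X ^ j : Polynomial ℂ) with hNp
  -- basic facts
  have hele : ∀ ν, e ν ≤ d := fun ν => CharAux.filter_sum_bound hm rfl ν
  have hBeval : ∀ ν : Nat.Partition (d * m), Polynomial.eval ζ (B ν) ≠ 0 := by
    intro ν
    rw [hB]
    have h1 : Polynomial.eval ζ ((ν.parts.map (CharAux.g m)).prod)
        = ((ν.parts.map (CharAux.g m)).map (Polynomial.eval ζ)).prod := by
      rw [show (Polynomial.eval ζ : Polynomial ℂ → ℂ) = (Polynomial.evalRingHom ζ : Polynomial ℂ → ℂ) from rfl]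
      exact map_multiset_prod (Polynomial.evalRingHom ζ) _
    rw [h1, Multiset.map_map]
    refine Multiset.prod_ne_zero fun h0 => ?_
    obtain ⟨j, hj, hj0⟩ := Multiset.mem_map.mp h0
    exact CharAux.eval_g_ne_zero hm hζ (ν.parts_pos hj) hj0
  have hNfac : Np = (1 - X ^ m : Polynomial ℂ) ^ d * A := by
    rw [hNp, Finset.prod_eq_multiset_prod, CharAux.prod_factor hm, CharAux.count_dvd_Icc hm d]
  have hDfac : ∀ ν, D ν = (1 - X ^ m : Polynomial ℂ) ^ (e ν) * B ν :=
    fun ν => CharAux.prod_factor hm ν.parts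
  have hXm : (1 - X ^ m : Polynomial ℂ) ≠ 0 := by
    intro h
    have := congrArg (Polynomial.eval 0) h
    simp [zero_pow hm.ne'] at this
  have hDne : ∀ ν, φ (D ν) ≠ 0 := by
    intro ν
    refine (map_ne_zero_iff φ hφinj).mpr ?_
    rw [hDfac ν]
    refine mul_ne_zero (pow_ne_zero _ hXm) fun h => hBeval ν ?_
    rw [h, Polynomial.eval_zero]
  have hkey : ∀ ν, E ν * D ν = Np * W := by
    intro ν
    rw [hE, hDfac ν, hNfac, hW,
      ← Finset.mul_prod_erase Finset.univ B (Finset.mem_univ ν)]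
    have hp : (1 - X ^ m : Polynomial ℂ) ^ (d - e ν) * (1 - X ^ m) ^ (e ν)
        = (1 - X ^ m) ^ d := by
      rw [← pow_add, Nat.sub_add_cancel (hele ν)]
    linear_combination (A * (∏ μ ∈ Finset.univ.erase ν, B μ) * B ν) * hp
  -- convert hf to φ-form
  have hconv : ∀ ν : Nat.Partition (d * m),
      RatFunc.C (c ν) * ((ν.parts.map fun i => ((1 : RatFunc ℂ) - RatFunc.X ^ i)⁻¹).prod)
        = φ (Polynomial.C (c ν)) * (φ (D ν))⁻¹ := by
    intro ν
    have hCc : RatFunc.C (c ν) = φ (Polynomial.C (c ν)) := (RatFunc.algebraMap_C _).symm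
    have hprod : ((ν.parts.map fun i => ((1 : RatFunc ℂ) - RatFunc.X ^ i)⁻¹).prod)
        = (φ (D ν))⁻¹ := by
      rw [show (fun i => ((1 : RatFunc ℂ) - RatFunc.X ^ i)⁻¹)
          = (fun i => (φ ((1 : Polynomial ℂ) - X ^ i))⁻¹) from funext fun i => by
          rw [map_sub, map_one, map_pow, RatFunc.algebraMap_X]]
      rw [Multiset.prod_map_inv]
      rw [hD, map_multiset_prod, Multiset.map_map]
      rfl
    rw [hCc, hprod]
  have hNconv : (∏ j ∈ Finset.Icc 1 (d * m), ((1 : RatFunc ℂ) - RatFunc.X ^ j)) = φ Np := by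
    rw [hNp, map_prod]
    exact Finset.prod_congr rfl fun j _ => by rw [map_sub, map_one, map_pow, RatFunc.algebraMap_X]
  rw [hNconv, Finset.sum_congr rfl (fun ν _ => hconv ν)] at hf
  -- multiply through by φ W and descend to a polynomial identity
  have hLHS : (φ Np * ∑ ν, φ (Polynomial.C (c ν)) * (φ (D ν))⁻¹) * φ W
      = φ (∑ ν, Polynomial.C (c ν) * E ν) := by
    rw [map_sum, Finset.mul_sum, Finset.sum_mul]
    refine Finset.sum_congr rfl fun ν _ => ?_
    have h1 : φ (E ν) * φ (D ν) = φ Np * φ W := by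
      rw [← map_mul, ← map_mul, hkey ν]
    have h2 : φ Np * (φ (Polynomial.C (c ν)) * (φ (D ν))⁻¹) * φ W
        = φ (Polynomial.C (c ν)) * (φ Np * φ W * (φ (D ν))⁻¹) := by ring
    rw [h2, ← h1, mul_inv_cancel_right₀ (hDne ν), ← map_mul]
  have hpoly : (∑ ν, Polynomial.C (c ν) * E ν) = fC * W := by
    apply hφinj
    calc φ (∑ ν, Polynomial.C (c ν) * E ν)
        = (φ Np * ∑ ν, φ (Polynomial.C (c ν)) * (φ (D ν))⁻¹) * φ W := hLHS.symm
      _ = φ fC * φ W := by rw [hf]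
      _ = φ (fC * W) := (map_mul φ _ _).symm
  -- evaluate at ζ
  have heval := congrArg (Polynomial.eval ζ) hpoly
  rw [Polynomial.eval_finset_sum] at heval
  have heν₀ : e ν₀ = d := by
    rw [he]
    simp only
    rw [hν₀, Multiset.countP_eq_card.mpr fun a ha => by
      rw [Multiset.eq_of_mem_replicate ha]]
    exact Multiset.card_replicate d m
  have hEeval0 : ∀ ν : Nat.Partition (d * m), ν ≠ ν₀ → Polynomial.eval ζ (E ν) = 0 := by
    intro ν hνne
    have helt : e ν < d := by
      refine lt_of_le_of_ne (hele ν) fun hcontr => hνne ?_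
      have h3 := CharAux.parts_eq_replicate_of_countP hm rfl ν hcontr
      exact Nat.Partition.ext (h3.trans hν₀.symm)
    have hz0 : Polynomial.eval ζ ((1 - X ^ m : Polynomial ℂ) ^ (d - e ν)) = 0 := by
      rw [Polynomial.eval_pow, Polynomial.eval_sub, Polynomial.eval_one, Polynomial.eval_pow,
        Polynomial.eval_X, hζ.pow_eq_one, sub_self]
      exact zero_pow (Nat.sub_ne_zero_of_lt helt)
    rw [hE]
    simp only [Polynomial.eval_mul, hz0, zero_mul]
  -- collapse the sum
  have hsum : (∑ ν : Nat.Partition (d * m), Polynomial.eval ζ (Polynomial.C (c ν) * E ν))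
      = c ν₀ * Polynomial.eval ζ (E ν₀) := by
    rw [Finset.sum_eq_single ν₀
      (fun ν _ hνne => by rw [Polynomial.eval_mul, hEeval0 ν hνne, mul_zero])
      (fun h => absurd (Finset.mem_univ ν₀) h)]
    rw [Polynomial.eval_mul, Polynomial.eval_C]
  rw [hsum] at heval
  -- the ν₀ term
  have hgm1 : CharAux.g m m = 1 := by
    unfold CharAux.g
    rw [if_pos (dvd_refl m), Nat.div_self hm, Finset.sum_range_one, pow_zero]
  have hBν₀ : B ν₀ = 1 := by
    rw [hB]
    simp only
    rw [hν₀, Multiset.map_replicate, hgm1, Multiset.prod_replicate, one_pow]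
  have hWsplit : W = ∏ μ ∈ Finset.univ.erase ν₀, B μ := by
    rw [hW, ← Finset.mul_prod_erase Finset.univ B (Finset.mem_univ ν₀), hBν₀, one_mul]
  have hEν₀ : Polynomial.eval ζ (E ν₀)
      = Polynomial.eval ζ A * Polynomial.eval ζ (∏ μ ∈ Finset.univ.erase ν₀, B μ) := by
    rw [hE]
    simp only
    rw [heν₀, Nat.sub_self, pow_zero, one_mul, Polynomial.eval_mul]
  have hW'ne : Polynomial.eval ζ (∏ μ ∈ Finset.univ.erase ν₀, B μ) ≠ 0 := by
    rw [Polynomial.eval_prod]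
    exact Finset.prod_ne_zero_iff.mpr fun μ _ => hBeval μ
  rw [hEν₀, Polynomial.eval_mul, hWsplit] at heval
  -- cancel the common nonzero factor
  have hcancel : c ν₀ * Polynomial.eval ζ A = Polynomial.eval ζ fC := by
    have h4 : (c ν₀ * Polynomial.eval ζ A) * Polynomial.eval ζ (∏ μ ∈ Finset.univ.erase ν₀, B μ)
        = Polynomial.eval ζ fC * Polynomial.eval ζ (∏ μ ∈ Finset.univ.erase ν₀, B μ) := by
      rw [← heval]; ring
    exact mul_right_cancel₀ hW'ne h4
  -- compute the values
  have hAeval : Polynomial.eval ζ A = ((d.factorial * m ^ d : ℕ) : ℂ) := by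
    rw [hA, CharAux.eval_A hm hζ d]
    push_cast
    ring
  have hzval : zPartition ν₀ = ((d.factorial * m ^ d : ℕ) : ℂ) := by
    unfold zPartition
    rw [hν₀]
    have htf : (Multiset.replicate d m).toFinset = {m} := by
      ext x
      simp [Multiset.mem_replicate, hd.ne']
    rw [htf, Finset.prod_singleton, Multiset.count_replicate_self]
  have hzne : ((d.factorial * m ^ d : ℕ) : ℂ) ≠ 0 := by
    rw [Nat.cast_ne_zero]
    positivity
  rw [← hcancel, hc]
  simp only
  rw [hzval, hAeval, div_mul_cancel₀ _ hzne]
end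

section
/- For any positive integer d and any positive integers m_1,…,m_k with sum m, the following inequality of real numbers holds: multinomial(d·m; d·m_1,…,d·m_k) / multinomial(m; m_1,…,m_k) ≥ d^{−(k−1)/2} · ( m^m / ∏_{j=1}^{k} m_j^{m_j} )^{d−1}, where multinomial(N; N_1,…,N_k) = N! / (N_1!·…·N_k!) for N = N_1 + … + N_k, and d^{−(k−1)/2} denotes the real power of d with exponent −(k−1)/2. -/
open Real Filter

private lemma stirling_step_ub (n : ℕ) :
    Real.log (Stirling.stirlingSeq (n+1)) - Real.log (Stirling.stirlingSeq (n+2)) ≤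
      1/(12*((n:ℝ)+1)) - 1/(12*((n:ℝ)+2)) := by
  have hN : (0:ℝ) < (n:ℝ) + 1 := by positivity
  set t : ℝ := (1:ℝ)/(2*((n:ℝ)+1)+1) with ht
  have ht0 : 0 < t := by rw [ht]; positivity
  have hx0 : (0:ℝ) ≤ t^2 := sq_nonneg t
  have hx1 : t^2 < 1 := by
    rw [ht, div_pow, one_pow, div_lt_one (by positivity)]
    nlinarith [Nat.cast_nonneg (α := ℝ) n]
  have hgeo : HasSum (fun k : ℕ => (1:ℝ)/3 * (t^2)^(k+1)) (1/3 * (t^2 / (1 - t^2))) := by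
    have h := (hasSum_geometric_of_lt_one hx0 hx1).mul_left (t^2)
    simp_rw [← _root_.pow_succ'] at h
    exact h.mul_left (1/3)
  have hle : Real.log (Stirling.stirlingSeq (n+1)) - Real.log (Stirling.stirlingSeq (n+2)) ≤
      1/3 * (t^2 / (1 - t^2)) := by
    refine hasSum_le (fun k => ?_) (Stirling.log_stirlingSeq_diff_hasSum n) hgeo
    have hbase : ((1:ℝ) / (2 * ((n:ℕ)+1 : ℕ) + 1)) ^ 2 = t^2 := by push_cast [ht]; ring
    rw [hbase]
    apply mul_le_mul_of_nonneg_right _ (pow_nonneg hx0 _)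
    rw [div_le_div_iff₀ (by positivity) (by norm_num)]
    push_cast
    linarith [Nat.cast_nonneg (α := ℝ) k]
  refine hle.trans (le_of_eq ?_)
  have h1t : 0 < 1 - t^2 := by linarith
  have e1 : t^2 * (4*((n:ℝ)+1)*((n:ℝ)+2)) = 1 - t^2 := by rw [ht]; field_simp; ring
  have e2 : t^2 / (1 - t^2) = 1/(4*((n:ℝ)+1)*((n:ℝ)+2)) := by
    rw [div_eq_div_iff h1t.ne' (by positivity), one_mul, e1]
  rw [e2]
  field_simp
  ring

private lemma stirling_step_lb (n : ℕ) :
    1/(12*((n:ℝ)+1)+1) - 1/(12*((n:ℝ)+2)+1) ≤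
      Real.log (Stirling.stirlingSeq (n+1)) - Real.log (Stirling.stirlingSeq (n+2)) := by
  have hN : (0:ℝ) ≤ (n:ℝ) := Nat.cast_nonneg n
  set t : ℝ := (1:ℝ)/(2*((n:ℝ)+1)+1) with ht
  have hfirst : (1:ℝ)/(2*((0:ℕ)+1:ℕ)+1) * (((1:ℝ) / (2 * ((n:ℕ)+1 : ℕ) + 1)) ^ 2) ^ ((0:ℕ)+1) ≤
      Real.log (Stirling.stirlingSeq (n+1)) - Real.log (Stirling.stirlingSeq (n+2)) :=
    le_hasSum (Stirling.log_stirlingSeq_diff_hasSum n) 0 (fun j _ => by positivity)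
  have hbase : ((1:ℝ) / (2 * ((n:ℕ)+1 : ℕ) + 1)) ^ 2 = t^2 := by push_cast [ht]; ring
  rw [hbase] at hfirst
  have h13 : (1:ℝ)/(2*((0:ℕ)+1:ℕ)+1) * (t^2)^((0:ℕ)+1) = 1/3 * t^2 := by norm_num
  rw [h13] at hfirst
  refine le_trans ?_ hfirst
  rw [ht, div_pow, one_pow]
  have hrw : 1/3 * ((1:ℝ)/(2*((n:ℝ)+1)+1)^2) = 1/(3*(2*((n:ℝ)+1)+1)^2) := by field_simp
  rw [hrw, div_sub_div _ _ (by positivity) (by positivity),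
    div_le_div_iff₀ (by positivity) (by positivity)]
  nlinarith [sq_nonneg ((n:ℝ))]

private lemma tendsto_log_stirling :
    Tendsto (fun N : ℕ => Real.log (Stirling.stirlingSeq (N+1))) atTop
      (nhds (Real.log (Real.sqrt Real.pi))) :=
  ((Real.continuousAt_log (Real.sqrt_pos.mpr Real.pi_pos).ne').tendsto).comp
    (Stirling.tendsto_stirlingSeq_sqrt_pi.comp (tendsto_add_atTop_nat 1))

private lemma tendsto_aux (c : ℝ) (hc : 0 < c) :
    Tendsto (fun N : ℕ => 1/(12*((N:ℝ)+1)+c)) atTop (nhds 0) := by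
  have h : Tendsto (fun N : ℕ => 12*((N:ℝ)+1)+c) atTop atTop := by
    apply tendsto_atTop_add_const_right
    exact Tendsto.const_mul_atTop (by norm_num)
      (tendsto_atTop_add_const_right _ 1 tendsto_natCast_atTop_atTop)
  exact h.inv_tendsto_atTop.congr (fun N => by simp [one_div])

private lemma tendsto_aux0 :
    Tendsto (fun N : ℕ => 1/(12*((N:ℝ)+1))) atTop (nhds 0) := by
  have h : Tendsto (fun N : ℕ => 12*((N:ℝ)+1)) atTop atTop :=
    Tendsto.const_mul_atTop (by norm_num)
      (tendsto_atTop_add_const_right _ 1 tendsto_natCast_atTop_atTop)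
  exact h.inv_tendsto_atTop.congr (fun N => by simp [one_div])

private lemma log_stirling_ub (n : ℕ) :
    Real.log (Stirling.stirlingSeq (n+1)) ≤ Real.log (Real.sqrt Real.pi) + 1/(12*((n:ℝ)+1)) := by
  have hmono : Monotone (fun N : ℕ => Real.log (Stirling.stirlingSeq (N+1)) - 1/(12*((N:ℝ)+1))) := by
    apply monotone_nat_of_le_succ
    intro N
    have h := stirling_step_ub N
    push_cast
    ring_nf at h ⊢
    linarith
  have htend : Tendsto (fun N : ℕ => Real.log (Stirling.stirlingSeq (N+1)) - 1/(12*((N:ℝ)+1)))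
      atTop (nhds (Real.log (Real.sqrt Real.pi) - 0)) :=
    tendsto_log_stirling.sub tendsto_aux0
  have := hmono.ge_of_tendsto htend n
  rw [sub_zero] at this
  linarith

private lemma log_stirling_lb (n : ℕ) :
    Real.log (Real.sqrt Real.pi) + 1/(12*((n:ℝ)+1)+1) ≤ Real.log (Stirling.stirlingSeq (n+1)) := by
  have hanti : Antitone (fun N : ℕ => Real.log (Stirling.stirlingSeq (N+1)) - 1/(12*((N:ℝ)+1)+1)) := by
    apply antitone_nat_of_succ_le
    intro N
    have h := stirling_step_lb N
    push_cast
    ring_nf at h ⊢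
    linarith
  have htend : Tendsto (fun N : ℕ => Real.log (Stirling.stirlingSeq (N+1)) - 1/(12*((N:ℝ)+1)+1))
      atTop (nhds (Real.log (Real.sqrt Real.pi) - 0)) :=
    tendsto_log_stirling.sub (tendsto_aux 1 one_pos)
  have := hanti.le_of_tendsto htend n
  rw [sub_zero] at this
  linarith

private noncomputable def Fa (n : ℕ) : ℝ :=
  Real.log (Real.sqrt Real.pi) + 1/2 * Real.log (2*(n:ℝ)) + (n:ℝ) * Real.log n - n

private lemma log_factorial_eq (j : ℕ) :
    Real.log ((j+1).factorial : ℝ) = Real.log (Stirling.stirlingSeq (j+1)) +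
      1/2 * Real.log (2*((j+1:ℕ):ℝ)) + ((j+1:ℕ):ℝ) * Real.log ((j+1:ℕ):ℝ) - ((j+1:ℕ):ℝ) := by
  have hf := Stirling.log_stirlingSeq_formula (j+1)
  have hlog : Real.log (((j+1:ℕ):ℝ) / Real.exp 1) = Real.log ((j+1:ℕ):ℝ) - 1 := by
    rw [Real.log_div (by positivity) (Real.exp_ne_zero 1), Real.log_exp]
  rw [hlog] at hf
  have : (Nat.factorial (j+1) : ℝ) = ((j+1).factorial : ℝ) := rfl
  push_cast at hf ⊢
  linarith

private lemma lf_ub {n : ℕ} (hn : 1 ≤ n) :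
    Real.log (n.factorial : ℝ) ≤ Fa n + 1/(12*(n:ℝ)) := by
  obtain ⟨j, rfl⟩ : ∃ j, n = j + 1 := ⟨n-1, by omega⟩
  have hb := log_stirling_ub j
  have he := log_factorial_eq j
  unfold Fa
  push_cast at he hb ⊢
  linarith

private lemma lf_lb {n : ℕ} (hn : 1 ≤ n) :
    Fa n + 1/(12*(n:ℝ)+1) ≤ Real.log (n.factorial : ℝ) := by
  obtain ⟨j, rfl⟩ : ∃ j, n = j + 1 := ⟨n-1, by omega⟩
  have hb := log_stirling_lb j
  have he := log_factorial_eq j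
  unfold Fa
  push_cast at he hb ⊢
  linarith

private lemma Fa_mul {d n : ℕ} (hd : 1 ≤ d) (hn : 1 ≤ n) :
    Fa (d*n) = Fa n + 1/2 * Real.log d + ((d:ℝ) * Real.log d) * (n:ℝ)
      + ((d:ℝ)-1) * ((n:ℝ) * Real.log n) - ((d:ℝ)-1) * (n:ℝ) := by
  have hd0 : (0:ℝ) < d := by exact_mod_cast hd
  have hn0 : (0:ℝ) < n := by exact_mod_cast hn
  unfold Fa
  push_cast
  rw [show (2:ℝ)*((d:ℝ)*(n:ℝ)) = (2*(n:ℝ))*(d:ℝ) by ring,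
    Real.log_mul (by positivity) hd0.ne',
    Real.log_mul hd0.ne' hn0.ne']
  ring

private lemma eps_claim {k d : ℕ} (hk : 2 ≤ k) (hd : 2 ≤ d) (m : Fin k → ℕ) (hm : ∀ i, 0 < m i) :
    1/(12*((∑ i, m i : ℕ):ℝ)) ≤
      ∑ i, (1/(12*((m i : ℕ):ℝ)+1) - 1/(12*((d:ℝ)*((m i : ℕ):ℝ)))) := by
  have hd0 : (2:ℝ) ≤ d := by exact_mod_cast hd
  have hμ : ∀ i, (1:ℝ) ≤ (m i : ℝ) := fun i => by exact_mod_cast hm i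
  have hμ0 : ∀ i, (0:ℝ) < (m i : ℝ) := fun i => lt_of_lt_of_le one_pos (hμ i)
  have hterm : ∀ i : Fin k, 11/(312*((m i : ℕ):ℝ)) ≤
      1/(12*((m i : ℕ):ℝ)+1) - 1/(12*((d:ℝ)*((m i : ℕ):ℝ))) := by
    intro i
    set μ : ℝ := (m i : ℝ) with hmu
    have h1μ : (1:ℝ) ≤ μ := hμ i
    have h0μ : (0:ℝ) < μ := hμ0 i
    have h1 : 1/(13*μ) ≤ 1/(12*μ+1) := by
      apply one_div_le_one_div_of_le (by positivity)
      linarith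
    have h2 : 1/(12*((d:ℝ)*μ)) ≤ 1/(24*μ) := by
      apply one_div_le_one_div_of_le (by positivity)
      nlinarith
    have h3 : 1/(13*μ) - 1/(24*μ) = 11/(312*μ) := by
      field_simp
      ring
    linarith
  have hsum : ∑ i, (11:ℝ)/(312*((m i : ℕ):ℝ)) ≤
      ∑ i, (1/(12*((m i : ℕ):ℝ)+1) - 1/(12*((d:ℝ)*((m i : ℕ):ℝ)))) :=
    Finset.sum_le_sum (fun i _ => hterm i)
  refine le_trans ?_ hsum
  -- now show 1/(12 M) ≤ ∑ 11/(312 μ i)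
  set M : ℕ := ∑ i, m i with hM
  have hMr : (0:ℝ) < (M:ℝ) := by
    have : 0 < M := by
      rw [hM]
      exact Finset.sum_pos (fun i _ => hm i) ⟨⟨0, by omega⟩, Finset.mem_univ _⟩
    exact_mod_cast this
  set i0 : Fin k := ⟨0, by omega⟩ with hi0
  set i1 : Fin k := ⟨1, by omega⟩ with hi1
  have hne : i0 ≠ i1 := by simp [hi0, hi1, Fin.ext_iff]
  have hsub : ({i0, i1} : Finset (Fin k)) ⊆ Finset.univ := Finset.subset_univ _
  have hsum2 : (m i0 : ℝ) + (m i1 : ℝ) ≤ (M:ℝ) := by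
    have : ∑ i ∈ ({i0, i1} : Finset (Fin k)), m i ≤ M :=
      Finset.sum_le_sum_of_subset hsub
    rw [Finset.sum_pair hne] at this
    exact_mod_cast this
  have hsum3 : ∑ i ∈ ({i0, i1} : Finset (Fin k)), (11:ℝ)/(312*((m i : ℕ):ℝ)) ≤
      ∑ i, (11:ℝ)/(312*((m i : ℕ):ℝ)) := by
    apply Finset.sum_le_sum_of_subset_of_nonneg hsub
    intro i _ _
    positivity
  rw [Finset.sum_pair hne] at hsum3
  refine le_trans ?_ hsum3
  have h0 : (0:ℝ) < (m i0 : ℝ) := hμ0 i0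
  have h1 : (0:ℝ) < (m i1 : ℝ) := hμ0 i1
  rw [div_add_div _ _ (by positivity) (by positivity), div_le_div_iff₀ (by positivity) (by positivity)]
  nlinarith [sq_nonneg ((m i0 : ℝ) - (m i1 : ℝ)), mul_pos h0 h1]
open Finset

/-- For any positive integer `d` and positive integers `m_1, …, m_k`
summing to `m`,
`multinomial(d·m; d·m_1,…,d·m_k) / multinomial(m; m_1,…,m_k)
  ≥ d^{−(k−1)/2} · (m^m / ∏_j m_j^{m_j})^{d−1}`. -/
theorem multinomial_stretch_quotient_bound
    (d k : ℕ) (hd : 0 < d) (hk : 0 < k) (m : Fin k → ℕ) (hm : ∀ i, 0 < m i) :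
    ((Nat.multinomial Finset.univ fun i => d * m i : ℕ) : ℝ) /
        ((Nat.multinomial Finset.univ m : ℕ) : ℝ) ≥
      (d : ℝ) ^ (-(((k : ℝ) - 1) / 2)) *
        (((∑ i, m i : ℕ) : ℝ) ^ (∑ i, m i) / ∏ i, (m i : ℝ) ^ (m i)) ^ (d - 1) := by
  have hμ0 : ∀ i, (0:ℝ) < (m i : ℝ) := fun i => by exact_mod_cast hm i
  by_cases hk1 : k = 1
  · subst hk1
    have h0 : (((m 0 : ℕ):ℝ)) ^ (m 0) ≠ 0 := pow_ne_zero _ (hμ0 0).ne'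
    rw [show (Finset.univ : Finset (Fin 1)) = {0} from rfl]
    rw [Nat.multinomial_singleton, Nat.multinomial_singleton]
    simp only [Fin.sum_univ_one, Fin.prod_univ_one, Nat.cast_one, div_self h0, one_pow, mul_one]
    norm_num
  by_cases hd1 : d = 1
  · subst hd1
    simp only [one_mul, Nat.cast_one, Real.one_rpow, Nat.sub_self, pow_zero, mul_one]
    have hBne : ((Nat.multinomial Finset.univ (fun i => m i) : ℕ):ℝ) ≠ 0 := by
      exact_mod_cast (Nat.multinomial_pos _ _).ne'
    rw [div_self hBne]
  have hk2 : 2 ≤ k := by omega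
  have hd2 : 2 ≤ d := by omega
  have hd0 : (0:ℝ) < d := by exact_mod_cast hd
  have hd1' : 1 ≤ d := hd
  set M : ℕ := ∑ i, m i with hM
  have hM1 : 1 ≤ M := by
    have : 0 < M := Finset.sum_pos (fun i _ => hm i) ⟨⟨0, by omega⟩, Finset.mem_univ _⟩
    omega
  have hMr : (0:ℝ) < (M:ℝ) := by exact_mod_cast hM1
  have hdM : ∑ i, d * m i = d * M := by rw [hM, Finset.mul_sum]
  set A : ℕ := Nat.multinomial Finset.univ (fun i => d * m i) with hA
  set B : ℕ := Nat.multinomial Finset.univ m with hB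
  have hApos : (0:ℝ) < (A:ℝ) := by exact_mod_cast Nat.multinomial_pos _ _
  have hBpos : (0:ℝ) < (B:ℝ) := by exact_mod_cast Nat.multinomial_pos _ _
  -- log of A and B
  have hAr : (∏ i, (((d * m i).factorial : ℕ):ℝ)) * (A:ℝ) = (((d*M).factorial : ℕ):ℝ) := by
    rw [← hdM]
    exact_mod_cast congrArg (Nat.cast (R := ℝ)) (Nat.multinomial_spec Finset.univ _)
  have hBr : (∏ i, (((m i).factorial : ℕ):ℝ)) * (B:ℝ) = ((M.factorial : ℕ):ℝ) := by
    rw [hM]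
    exact_mod_cast congrArg (Nat.cast (R := ℝ)) (Nat.multinomial_spec Finset.univ _)
  have hfacne : ∀ n : ℕ, ((n.factorial : ℕ):ℝ) ≠ 0 :=
    fun n => by exact_mod_cast n.factorial_pos.ne'
  have hlogA : Real.log (A:ℝ) =
      Real.log (((d*M).factorial : ℕ):ℝ) - ∑ i, Real.log (((d * m i).factorial : ℕ):ℝ) := by
    have h := congrArg Real.log hAr
    rw [Real.log_mul (Finset.prod_ne_zero_iff.mpr (fun i _ => hfacne _)) hApos.ne',
      Real.log_prod (fun i _ => hfacne _)] at h
    linarith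
  have hlogB : Real.log (B:ℝ) =
      Real.log ((M.factorial : ℕ):ℝ) - ∑ i, Real.log (((m i).factorial : ℕ):ℝ) := by
    have h := congrArg Real.log hBr
    rw [Real.log_mul (Finset.prod_ne_zero_iff.mpr (fun i _ => hfacne _)) hBpos.ne',
      Real.log_prod (fun i _ => hfacne _)] at h
    linarith
  -- factorial bounds
  have h1 : Fa (d*M) ≤ Real.log (((d*M).factorial : ℕ):ℝ) := by
    have h := lf_lb (n := d*M) (Nat.one_le_iff_ne_zero.mpr (by positivity))
    have hp : (0:ℝ) < 1/(12*((d*M : ℕ):ℝ)+1) := by positivity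
    linarith
  have h2 : Real.log ((M.factorial : ℕ):ℝ) ≤ Fa M + 1/(12*(M:ℝ)) := lf_ub hM1
  have h3 : ∑ i, Real.log (((d * m i).factorial : ℕ):ℝ) ≤
      ∑ i, Fa (d * m i) + ∑ i, 1/(12*((d:ℝ)*((m i : ℕ):ℝ))) := by
    rw [← Finset.sum_add_distrib]
    refine Finset.sum_le_sum (fun i _ => ?_)
    have h := lf_ub (n := d * m i) (Nat.one_le_iff_ne_zero.mpr (by
      have := hm i; positivity))
    have hc : ((d * m i : ℕ):ℝ) = (d:ℝ) * ((m i : ℕ):ℝ) := by push_cast; ring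
    rw [hc] at h
    exact h
  have h4 : ∑ i, Fa (m i) + ∑ i, 1/(12*((m i : ℕ):ℝ)+1) ≤
      ∑ i, Real.log (((m i).factorial : ℕ):ℝ) := by
    rw [← Finset.sum_add_distrib]
    exact Finset.sum_le_sum (fun i _ => lf_lb (hm i))
  -- the F-identity
  have hMc : ∑ i, ((m i : ℕ):ℝ) = (M:ℝ) := by rw [hM]; push_cast; ring
  have hcomb : (Fa (d*M) - ∑ i, Fa (d * m i)) - (Fa M - ∑ i, Fa (m i)) =
      -(((k:ℝ)-1)/2) * Real.log d +
        ((d:ℝ)-1) * ((M:ℝ) * Real.log (M:ℝ) - ∑ i, ((m i : ℕ):ℝ) * Real.log ((m i : ℕ):ℝ)) := by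
    have hFd := Fa_mul (d := d) (n := M) hd1' hM1
    have hFs : ∑ i, Fa (d * m i) = ∑ i, (Fa (m i) + 1/2 * Real.log d
        + ((d:ℝ) * Real.log d) * ((m i : ℕ):ℝ)
        + ((d:ℝ)-1) * (((m i : ℕ):ℝ) * Real.log ((m i : ℕ):ℝ)) - ((d:ℝ)-1) * ((m i : ℕ):ℝ)) :=
      Finset.sum_congr rfl (fun i _ => Fa_mul hd1' (hm i))
    rw [hFd, hFs]
    simp only [Finset.sum_sub_distrib, Finset.sum_add_distrib, Finset.sum_const,
      Finset.card_univ, Fintype.card_fin, nsmul_eq_mul, ← Finset.mul_sum, hMc]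
    ring
  -- epsilon claim
  have heps := eps_claim hk2 hd2 m hm
  rw [← hM, Finset.sum_sub_distrib] at heps
  -- key log inequality
  have key : -(((k:ℝ)-1)/2) * Real.log d +
      ((d:ℝ)-1) * ((M:ℝ) * Real.log (M:ℝ) - ∑ i, ((m i : ℕ):ℝ) * Real.log ((m i : ℕ):ℝ)) ≤
      Real.log (A:ℝ) - Real.log (B:ℝ) := by
    rw [hlogA, hlogB]
    linarith
  -- positivity of RHS and conclusion
  have hXpos : (0:ℝ) < ((M : ℕ):ℝ) ^ M / ∏ i, ((m i : ℕ):ℝ) ^ (m i) :=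
    div_pos (pow_pos hMr M) (Finset.prod_pos (fun i _ => pow_pos (hμ0 i) _))
  have hRHSpos : (0:ℝ) < (d : ℝ) ^ (-(((k : ℝ) - 1) / 2)) *
      (((M : ℕ):ℝ) ^ M / ∏ i, ((m i : ℕ):ℝ) ^ (m i)) ^ (d - 1) :=
    mul_pos (Real.rpow_pos_of_pos hd0 _) (pow_pos hXpos _)
  have hlogRHS : Real.log ((d : ℝ) ^ (-(((k : ℝ) - 1) / 2)) *
      (((M : ℕ):ℝ) ^ M / ∏ i, ((m i : ℕ):ℝ) ^ (m i)) ^ (d - 1)) =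
      -(((k:ℝ)-1)/2) * Real.log d +
        ((d:ℝ)-1) * ((M:ℝ) * Real.log (M:ℝ) - ∑ i, ((m i : ℕ):ℝ) * Real.log ((m i : ℕ):ℝ)) := by
    rw [Real.log_mul (Real.rpow_pos_of_pos hd0 _).ne' (pow_pos hXpos _).ne',
      Real.log_rpow hd0, Real.log_pow,
      Real.log_div (pow_pos hMr M).ne'
        (Finset.prod_pos (fun i _ => pow_pos (hμ0 i) _)).ne',
      Real.log_pow, Real.log_prod (fun i _ => (pow_pos (hμ0 i) _).ne')]
    simp only [Real.log_pow]
    rw [Nat.cast_sub hd1']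
    push_cast
    ring
  rw [ge_iff_le, ← Real.exp_log hRHSpos, ← Real.exp_log (div_pos hApos hBpos)]
  apply Real.exp_le_exp.mpr
  rw [Real.log_div hApos.ne' hBpos.ne', hlogRHS]
  exact key
end

section
/- For any integer d > 1, any integer k > 1, and any positive integers m_1,…,m_k with sum m, the inequality multinomial(d·m; d·m_1,…,d·m_k) / multinomial(m; m_1,…,m_k) ≥ ∏_{j=1}^{k} (τ(d·m_j) − 1) holds, where τ(N) denotes the number of positive divisors of N. -/
open Finset

/-- Two-variable Vandermonde lower bound. -/
lemma choose_mul_choose_le_choose (a b c d : ℕ) :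
    a.choose c * b.choose d ≤ (a + b).choose (c + d) := by
  rw [Nat.add_choose_eq]
  exact Finset.single_le_sum (f := fun ij => a.choose ij.1 * b.choose ij.2)
    (fun i _ => Nat.zero_le _) (Finset.HasAntidiagonal.mem_antidiagonal.mpr (rfl : (c, d).1 + (c, d).2 = c + d))

lemma mul_le_choose_aux : ∀ n A B : ℕ, A + B ≤ n → 1 ≤ A → 1 ≤ B →
    A * B ≤ (A + B).choose A := by
  intro n
  induction n with
  | zero => intro A B h hA hB; omega
  | succ n ih =>
    intro A B h hA hB
    rcases A with _ | a
    · omega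
    rcases B with _ | b
    · omega
    rcases Nat.eq_zero_or_pos a with ha | ha
    · subst ha
      simp [Nat.choose_one_right]
    rcases Nat.eq_zero_or_pos b with hb | hb
    · subst hb
      have : (a + 1 + (0 + 1)).choose (a + 1) = a + 2 := by
        rw [show a + 1 + (0 + 1) = (a + 1) + 1 by omega]
        exact Nat.choose_succ_self_right (a + 1)
      omega
    have h1 := ih a (b + 1) (by omega) (by omega) (by omega)
    have h2 := ih (a + 1) b (by omega) (by omega) (by omega)
    have hsplit : (a + 1 + (b + 1)).choose (a + 1)
        = (a + (b + 1)).choose a + (a + 1 + b).choose (a + 1) := by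
      rw [show a + 1 + (b + 1) = (a + b + 1) + 1 by ring, Nat.choose_succ_succ]
      congr 2 <;> omega
    nlinarith [h1, h2, hsplit]

lemma mul_le_choose {A B : ℕ} (hA : 1 ≤ A) (hB : 1 ≤ B) : A * B ≤ (A + B).choose A :=
  mul_le_choose_aux (A + B) A B le_rfl hA hB

lemma step_lemma (e A S : ℕ) (he : 1 ≤ e) (hA : 1 ≤ A) (hS : 1 ≤ S) :
    (e + 1) * A * ((A + S).choose A)
      ≤ 2 * (((e + 1) * A + (e + 1) * S).choose ((e + 1) * A)) := by
  have h1 : (A + S).choose A * ((e * A + e * S).choose (e * A))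
      ≤ ((e + 1) * A + (e + 1) * S).choose ((e + 1) * A) := by
    have := choose_mul_choose_le_choose (A + S) (e * A + e * S) A (e * A)
    have e1 : A + S + (e * A + e * S) = (e + 1) * A + (e + 1) * S := by ring
    have e2 : A + e * A = (e + 1) * A := by ring
    rwa [e1, e2] at this
  have h2 : e * A * (e * S) ≤ (e * A + e * S).choose (e * A) :=
    mul_le_choose (Nat.mul_pos he hA) (Nat.mul_pos he hS)
  have h3 : (e + 1) * A ≤ 2 * (e * A * (e * S)) := by
    have h4 : e + 1 ≤ 2 * (e * (e * S)) := by
      have h5 : e ≤ e * (e * S) := Nat.le_mul_of_pos_right e (Nat.mul_pos he hS)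
      omega
    calc (e + 1) * A ≤ 2 * (e * (e * S)) * A := Nat.mul_le_mul_right _ h4
      _ = 2 * (e * A * (e * S)) := by ring
  calc (e + 1) * A * ((A + S).choose A)
      ≤ 2 * (e * A * (e * S)) * ((A + S).choose A) :=
        Nat.mul_le_mul_right _ h3
    _ ≤ 2 * ((A + S).choose A * ((e * A + e * S).choose (e * A))) := by
        rw [mul_assoc]
        exact Nat.mul_le_mul_left 2 (by
          rw [mul_comm]
          exact Nat.mul_le_mul_left _ h2)
    _ ≤ 2 * (((e + 1) * A + (e + 1) * S).choose ((e + 1) * A)) :=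
        Nat.mul_le_mul_left 2 h1

lemma base_lemma (e A B : ℕ) (he : 1 ≤ e) (hA : 1 ≤ A) (hB : 1 ≤ B) :
    (e + 1) * A * ((e + 1) * B) * ((A + B).choose A)
      ≤ 2 ^ 2 * (((e + 1) * A + (e + 1) * B).choose ((e + 1) * A)) := by
  have h1 : (A + B).choose A * ((e * A + e * B).choose (e * A))
      ≤ ((e + 1) * A + (e + 1) * B).choose ((e + 1) * A) := by
    have := choose_mul_choose_le_choose (A + B) (e * A + e * B) A (e * A)
    have e1 : A + B + (e * A + e * B) = (e + 1) * A + (e + 1) * B := by ring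
    have e2 : A + e * A = (e + 1) * A := by ring
    rwa [e1, e2] at this
  have h2 : e * A * (e * B) ≤ (e * A + e * B).choose (e * A) :=
    mul_le_choose (Nat.mul_pos he hA) (Nat.mul_pos he hB)
  have h3 : (e + 1) * A * ((e + 1) * B) ≤ 2 ^ 2 * (e * A * (e * B)) := by
    have h4 : (e + 1) * (e + 1) ≤ 2 ^ 2 * (e * e) := by
      have h5 : e + 1 ≤ 2 * e := by omega
      calc (e + 1) * (e + 1) ≤ (2 * e) * (2 * e) := Nat.mul_le_mul h5 h5
        _ = 2 ^ 2 * (e * e) := by ring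
    calc (e + 1) * A * ((e + 1) * B) = (e + 1) * (e + 1) * (A * B) := by ring
      _ ≤ 2 ^ 2 * (e * e) * (A * B) := Nat.mul_le_mul_right _ h4
      _ = 2 ^ 2 * (e * A * (e * B)) := by ring
  calc (e + 1) * A * ((e + 1) * B) * ((A + B).choose A)
      ≤ 2 ^ 2 * (e * A * (e * B)) * ((A + B).choose A) := Nat.mul_le_mul_right _ h3
    _ ≤ 2 ^ 2 * ((A + B).choose A * ((e * A + e * B).choose (e * A))) := by
        rw [mul_assoc]
        exact Nat.mul_le_mul_left _ (by
          rw [mul_comm]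
          exact Nat.mul_le_mul_left _ h2)
    _ ≤ 2 ^ 2 * (((e + 1) * A + (e + 1) * B).choose ((e + 1) * A)) :=
        Nat.mul_le_mul_left _ h1

lemma main_lemma {ι : Type*} [DecidableEq ι] (e : ℕ) (he : 1 ≤ e) (f : ι → ℕ) :
    ∀ s : Finset ι, (∀ i ∈ s, 1 ≤ f i) → 2 ≤ s.card →
      (∏ i ∈ s, (e + 1) * f i) * Nat.multinomial s f
        ≤ 2 ^ s.card * Nat.multinomial s (fun i => (e + 1) * f i) := by
  intro s
  induction s using Finset.induction_on with
  | empty => intro _ h; simp at h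
  | @insert a s ha ih =>
    intro hf hs
    by_cases h1 : s.card ≤ 1
    · -- base case: s is a singleton
      have hcard : s.card = 1 := by
        rw [Finset.card_insert_of_notMem ha] at hs; omega
      obtain ⟨b, rfl⟩ := Finset.card_eq_one.mp hcard
      have hA := hf a (Finset.mem_insert_self a _)
      have hB := hf b (Finset.mem_insert_of_mem (Finset.mem_singleton_self b))
      rw [Nat.multinomial_insert ha, Nat.multinomial_insert ha, Finset.prod_insert ha,
        Finset.card_insert_of_notMem ha, hcard]
      simp only [Finset.prod_singleton, Finset.sum_singleton, Nat.multinomial_singleton,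
        mul_one]
      have := base_lemma e (f a) (f b) he hA hB
      calc (e + 1) * f a * ((e + 1) * f b) * ((f a + f b).choose (f a))
          ≤ 2 ^ 2 * (((e + 1) * f a + (e + 1) * f b).choose ((e + 1) * f a)) := this
        _ = 2 ^ (1 + 1) * (((e + 1) * f a + (e + 1) * f b).choose ((e + 1) * f a)) := by
            norm_num
    · have hs2 : 2 ≤ s.card := by omega
      have hfs : ∀ i ∈ s, 1 ≤ f i := fun i hi => hf i (Finset.mem_insert_of_mem hi)
      have hIH := ih hfs hs2
      have hne : s.Nonempty := Finset.card_pos.mp (by omega)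
      have hS0 : 0 < ∑ i ∈ s, f i := Finset.sum_pos hfs hne
      have hS : 1 ≤ ∑ i ∈ s, f i := hS0
      have hA := hf a (Finset.mem_insert_self a _)
      rw [Nat.multinomial_insert ha, Nat.multinomial_insert ha, Finset.prod_insert ha,
        Finset.card_insert_of_notMem ha]
      have hsum : ∑ i ∈ s, (e + 1) * f i = (e + 1) * ∑ i ∈ s, f i := by
        rw [Finset.mul_sum]
      rw [hsum]
      have hstep := step_lemma e (f a) (∑ i ∈ s, f i) he hA hS
      calc (e + 1) * f a * (∏ i ∈ s, (e + 1) * f i)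
            * ((f a + ∑ i ∈ s, f i).choose (f a) * Nat.multinomial s f)
          = ((e + 1) * f a * ((f a + ∑ i ∈ s, f i).choose (f a)))
            * ((∏ i ∈ s, (e + 1) * f i) * Nat.multinomial s f) := by ring
        _ ≤ (2 * (((e + 1) * f a + (e + 1) * ∑ i ∈ s, f i).choose ((e + 1) * f a)))
            * (2 ^ s.card * Nat.multinomial s (fun i => (e + 1) * f i)) :=
            Nat.mul_le_mul hstep hIH
        _ = 2 ^ (s.card + 1)
            * (((e + 1) * f a + (e + 1) * ∑ i ∈ s, f i).choose ((e + 1) * f a)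
              * Nat.multinomial s (fun i => (e + 1) * f i)) := by
            rw [pow_succ]; ring

lemma divisors_card_bound (n : ℕ) (hn : 0 < n) : 2 * n.divisors.card ≤ n + 2 := by
  have hmem : n ∈ n.divisors := Nat.mem_divisors_self n hn.ne'
  have hsub : n.divisors.erase n ⊆ Finset.Icc 1 (n / 2) := by
    intro x hx
    have hxne := Finset.ne_of_mem_erase hx
    have hxd := Finset.mem_of_mem_erase hx
    rw [Nat.mem_divisors] at hxd
    obtain ⟨⟨c, hc⟩, hn0⟩ := hxd
    have hx0 : 0 < x := by
      rcases Nat.eq_zero_or_pos x with h | h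
      · subst h; simp at hc; omega
      · exact h
    have hc2 : 2 ≤ c := by
      rcases c with _ | _ | c
      · omega
      · omega
      · omega
    have h2x : 2 * x ≤ n := by nlinarith
    exact Finset.mem_Icc.mpr ⟨hx0, by omega⟩
  have hcard := Finset.card_le_card hsub
  rw [Finset.card_erase_of_mem hmem, Nat.card_Icc] at hcard
  have hpos : 1 ≤ n.divisors.card := Finset.card_pos.mpr ⟨n, hmem⟩
  omega

/-- For integers `d > 1`, `k > 1` and positive integers `m_1, …, m_k`,
`multinomial(d·m; d·m_1,…,d·m_k) / multinomial(m; m_1,…,m_k) ≥ ∏_j (τ(d·m_j) − 1)`,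
where `τ(N)` is the number of positive divisors of `N`. -/
theorem multinomial_stretch_quotient_divisor_bound
    (d k : ℕ) (hd : 1 < d) (hk : 1 < k) (m : Fin k → ℕ) (hm : ∀ i, 0 < m i) :
    ((Nat.multinomial Finset.univ fun i => d * m i : ℕ) : ℝ) /
        ((Nat.multinomial Finset.univ m : ℕ) : ℝ) ≥
      ∏ i, (((d * m i).divisors.card : ℝ) - 1) := by
  obtain ⟨e, rfl⟩ : ∃ e, d = e + 1 := ⟨d - 1, by omega⟩
  have he : 1 ≤ e := by omega
  have hM1 : 0 < Nat.multinomial (Finset.univ : Finset (Fin k)) m :=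
    Nat.multinomial_pos _ _
  have hM1R : (0 : ℝ) < (Nat.multinomial (Finset.univ : Finset (Fin k)) m : ℝ) := by
    exact_mod_cast hM1
  have h2k : (0 : ℝ) < 2 ^ k := by positivity
  have hcard : (Finset.univ : Finset (Fin k)).card = k := by simp
  have key := main_lemma e he m Finset.univ (fun i _ => hm i) (by rw [hcard]; omega)
  rw [hcard] at key
  rw [ge_iff_le]
  have hpos : ∀ i : Fin k, 0 < (e + 1) * m i := fun i => by
    have := hm i; positivity
  calc ∏ i, ((((e + 1) * m i).divisors.card : ℝ) - 1)
      ≤ ∏ i, (((e + 1) * m i : ℕ) : ℝ) / 2 := by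
        apply Finset.prod_le_prod
        · intro i _
          have h1 : 1 ≤ ((e + 1) * m i).divisors.card :=
            Finset.card_pos.mpr ⟨(e + 1) * m i, Nat.mem_divisors_self _ (hpos i).ne'⟩
          have : (1 : ℝ) ≤ (((e + 1) * m i).divisors.card : ℝ) := by exact_mod_cast h1
          linarith
        · intro i _
          have hb := divisors_card_bound ((e + 1) * m i) (hpos i)
          have : (2 * ((e + 1) * m i).divisors.card : ℝ) ≤ ((e + 1) * m i : ℕ) + 2 := by
            exact_mod_cast hb
          push_cast at this ⊢
          linarith
    _ = (((∏ i, (e + 1) * m i : ℕ) : ℝ)) / 2 ^ k := by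
        rw [Finset.prod_div_distrib, Finset.prod_const, hcard]
        push_cast
        ring
    _ ≤ ((Nat.multinomial Finset.univ fun i => (e + 1) * m i : ℕ) : ℝ) /
          ((Nat.multinomial Finset.univ m : ℕ) : ℝ) := by
        rw [div_le_div_iff₀ h2k hM1R]
        have : ((∏ i, (e + 1) * m i : ℕ) : ℝ) * (Nat.multinomial Finset.univ m : ℕ)
            ≤ ((2 : ℝ) ^ k) * ((Nat.multinomial Finset.univ fun i => (e + 1) * m i : ℕ) : ℝ) := by
          exact_mod_cast key
        linarith
end

section
/- For every integer n ≥ 9, one has B_n(n²/3) ≤ 2, where B_n(x) = Σ_{d | n} Q(n,d) · x^{1/d − 1} (sum over all positive divisors d of n), and Q(n,d) = ( d^n · ((n/d)!)^d / n! )^{1/d}. -/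
open Real Finset

/-- The `d`-th summand of `B_n(n²/3)`. -/
noncomputable def trm (n d : ℕ) : ℝ :=
  ((d : ℝ) ^ n * ((n / d).factorial : ℝ) ^ d / (n.factorial : ℝ)) ^ ((1 : ℝ) / d) *
    ((n : ℝ) ^ 2 / 3) ^ ((1 : ℝ) / d - 1)

lemma trm_one (n : ℕ) (hn : 0 < n) : trm n 1 = 1 := by
  unfold trm
  have h : (n.factorial : ℝ) ≠ 0 := Nat.cast_ne_zero.mpr n.factorial_ne_zero
  norm_num [Nat.div_one, div_self h]

lemma trm_le (n d : ℕ) (q : ℝ) (hn : 0 < n) (hd : 0 < d) (hq : 0 ≤ q)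
    (h : (d : ℝ) ^ n * ((n / d).factorial : ℝ) ^ d / (n.factorial : ℝ) * ((n : ℝ) ^ 2 / 3)
      ≤ (q * ((n : ℝ) ^ 2 / 3)) ^ d) : trm n d ≤ q := by
  unfold trm
  set A : ℝ := (d : ℝ) ^ n * ((n / d).factorial : ℝ) ^ d / (n.factorial : ℝ) with hA
  have hA0 : 0 ≤ A := by positivity
  have hx : (0:ℝ) < (n : ℝ) ^ 2 / 3 := by positivity
  set x : ℝ := (n : ℝ) ^ 2 / 3
  have hdR : (0:ℝ) < (d:ℝ) := by exact_mod_cast hd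
  have e1 : x ^ ((1:ℝ)/d - 1) = x ^ ((1:ℝ)/d) / x := by
    rw [Real.rpow_sub hx, Real.rpow_one]
  rw [e1, mul_div_assoc', ← Real.mul_rpow hA0 hx.le]
  rw [div_le_iff₀ hx]
  calc (A * x) ^ ((1:ℝ)/d) ≤ ((q * x) ^ d) ^ ((1:ℝ)/d) := by
        apply Real.rpow_le_rpow (by positivity) h (by positivity)
    _ = q * x := by
        rw [← Real.rpow_natCast (q*x) d, ← Real.rpow_mul (by positivity)]
        rw [mul_one_div, div_self (ne_of_gt hdR), Real.rpow_one]

/-! ### Stirling-type bounds -/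

lemma sqrt_pi_le_stirlingSeq (m : ℕ) (hm : 1 ≤ m) : √π ≤ Stirling.stirlingSeq m := by
  obtain ⟨k, rfl⟩ := Nat.exists_eq_add_of_le hm
  have ht : Filter.Tendsto (Stirling.stirlingSeq ∘ Nat.succ) Filter.atTop (nhds (√π)) := by
    apply Filter.Tendsto.comp Stirling.tendsto_stirlingSeq_sqrt_pi
    exact Filter.tendsto_add_atTop_nat 1
  have := Stirling.stirlingSeq'_antitone.le_of_tendsto ht k
  simpa [Nat.succ_eq_add_one, Nat.add_comm] using this

lemma fact_lower (n : ℕ) (hn : 1 ≤ n) :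
    √π * (√(2 * n) * ((n : ℝ) / exp 1) ^ n) ≤ (n.factorial : ℝ) := by
  have h := sqrt_pi_le_stirlingSeq n hn
  have hnR : (0:ℝ) < (n:ℝ) := by exact_mod_cast hn
  rw [Stirling.stirlingSeq, le_div_iff₀ (by positivity)] at h
  linarith [h]

lemma fact_upper (m : ℕ) (hm : 1 ≤ m) :
    (m.factorial : ℝ) ≤ exp 1 * √m * ((m : ℝ) / exp 1) ^ m := by
  have hmR : (0:ℝ) < (m:ℝ) := by exact_mod_cast hm
  have h1 : Stirling.stirlingSeq m ≤ Stirling.stirlingSeq 1 := by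
    obtain ⟨k, rfl⟩ := Nat.exists_eq_add_of_le hm
    have := Stirling.stirlingSeq'_antitone (Nat.zero_le k)
    simpa [Nat.succ_eq_add_one, Nat.add_comm] using this
  rw [Stirling.stirlingSeq_one] at h1
  rw [Stirling.stirlingSeq, div_le_iff₀ (by positivity)] at h1
  calc (m.factorial : ℝ) ≤ exp 1 / √2 * (√(2 * m) * ((m:ℝ) / exp 1) ^ m) := h1
    _ = exp 1 * √m * ((m : ℝ) / exp 1) ^ m := by
        rw [show (2 * m : ℝ) = 2 * m from rfl, Real.sqrt_mul (by norm_num : (0:ℝ) ≤ 2)]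
        rw [div_mul_eq_mul_div, mul_comm (√2) (√m)]
        field_simp

lemma A_le (n d m : ℕ) (hm : 1 ≤ m) (hd : 1 ≤ d) (hmd : m * d = n) :
    (d : ℝ) ^ n * (m.factorial : ℝ) ^ d / (n.factorial : ℝ)
      ≤ (exp 1 * √m) ^ d / (√π * √(2 * n)) := by
  have hn : 1 ≤ n := by nlinarith
  have hnf : (0:ℝ) < (n.factorial : ℝ) := by exact_mod_cast n.factorial_pos
  have hS : (0:ℝ) < √π * √(2 * n) := by
    have h1 : (0:ℝ) < (n:ℝ) := by exact_mod_cast hn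
    have h2 : (0:ℝ) < √(2*n) := Real.sqrt_pos.mpr (by linarith)
    have hp : (0:ℝ) < √π := Real.sqrt_pos.mpr Real.pi_pos
    positivity
  have hnum : (d : ℝ) ^ n * (m.factorial : ℝ) ^ d
      ≤ (exp 1 * √m) ^ d * ((n : ℝ) / exp 1) ^ n := by
    have h1 : (m.factorial : ℝ) ^ d ≤ (exp 1 * √m * ((m : ℝ) / exp 1) ^ m) ^ d := by
      apply pow_le_pow_left₀ (by positivity) (fact_upper m hm)
    calc (d : ℝ) ^ n * (m.factorial : ℝ) ^ d
        ≤ (d : ℝ) ^ n * (exp 1 * √m * ((m : ℝ) / exp 1) ^ m) ^ d := by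
          apply mul_le_mul_of_nonneg_left h1 (by positivity)
      _ = (exp 1 * √m) ^ d * ((d:ℝ) ^ n * (((m : ℝ) / exp 1) ^ m) ^ d) := by ring
      _ = (exp 1 * √m) ^ d * ((n : ℝ) / exp 1) ^ n := by
          congr 1
          rw [← pow_mul, hmd]
          rw [div_pow, div_pow, ← mul_div_assoc]
          congr 1
          · rw [← mul_pow]
            congr 1
            push_cast [← hmd]
            ring
  have hden : √π * (√(2 * n) * ((n : ℝ) / exp 1) ^ n) ≤ (n.factorial : ℝ) :=
    fact_lower n hn
  rw [div_le_div_iff₀ hnf hS]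
  calc (d : ℝ) ^ n * (m.factorial : ℝ) ^ d * (√π * √(2 * n))
      ≤ ((exp 1 * √m) ^ d * ((n : ℝ) / exp 1) ^ n) * (√π * √(2 * n)) := by
        apply mul_le_mul_of_nonneg_right hnum hS.le
    _ = (exp 1 * √m) ^ d * (√π * (√(2 * n) * ((n : ℝ) / exp 1) ^ n)) := by ring
    _ ≤ (exp 1 * √m) ^ d * (n.factorial : ℝ) := by
        apply mul_le_mul_of_nonneg_left hden (by positivity)

lemma trm_le_of_key (n d m : ℕ) (q : ℝ) (hm : 1 ≤ m) (hd : 1 ≤ d) (hmd : m * d = n)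
    (hq : 0 ≤ q)
    (key : (exp 1 * √m) ^ d * ((n : ℝ) ^ 2 / 3)
      ≤ (q * ((n : ℝ) ^ 2 / 3)) ^ d * (√π * √(2 * n))) : trm n d ≤ q := by
  have hn : 0 < n := by nlinarith
  have hnd : n / d = m := by rw [← hmd, Nat.mul_div_cancel _ hd]
  apply trm_le n d q hn hd hq
  rw [hnd]
  have hS : (0:ℝ) < √π * √(2 * n) := by
    have h1 : (0:ℝ) < √π := Real.sqrt_pos.mpr Real.pi_pos
    have h2 : (0:ℝ) < √(2*(n:ℝ)) := Real.sqrt_pos.mpr (by positivity)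
    positivity
  have hx : (0:ℝ) ≤ (n:ℝ)^2/3 := by positivity
  calc (d : ℝ) ^ n * (m.factorial : ℝ) ^ d / (n.factorial : ℝ) * ((n : ℝ) ^ 2 / 3)
      ≤ (exp 1 * √m) ^ d / (√π * √(2 * n)) * ((n : ℝ) ^ 2 / 3) := by
        apply mul_le_mul_of_nonneg_right (A_le n d m hm hd hmd) hx
    _ ≤ (q * ((n : ℝ) ^ 2 / 3)) ^ d := by
        rw [div_mul_eq_mul_div, div_le_iff₀ hS]
        exact key

/-! ### Numeric facts -/

lemma e_sq : (exp 1)^2 ≤ 7.3890561 := by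
  nlinarith [Real.exp_one_lt_d9.le, Real.exp_pos 1]

lemma pi_ge' : (3.141592 : ℝ) ≤ π := Real.pi_gt_d6.le

lemma sq_S (n : ℕ) : (√π * √(2 * (n:ℝ))) ^ 2 = π * (2 * n) := by
  rw [mul_pow, Real.sq_sqrt Real.pi_pos.le, Real.sq_sqrt (by positivity)]

lemma le_mul_S {P R : ℝ} (n : ℕ) (hR : 0 ≤ R)
    (h : P ^ 2 ≤ R ^ 2 * (π * (2 * n))) : P ≤ R * (√π * √(2 * (n:ℝ))) := by
  apply le_of_pow_le_pow_left₀ (n := 2) (by norm_num) (by positivity)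
  calc P ^ 2 ≤ R ^ 2 * (π * (2 * n)) := h
    _ = (R * (√π * √(2 * (n:ℝ)))) ^ 2 := by rw [mul_pow, sq_S]

/-! ### The four per-divisor bounds for `n ≥ 19` -/

lemma trm2 (n : ℕ) (hn : 19 ≤ n) (h2 : 2 ∣ n) : trm n 2 ≤ 1/4 := by
  obtain ⟨m, hm⟩ := h2
  have hm1 : 1 ≤ m := by omega
  have hnR : (19:ℝ) ≤ n := by exact_mod_cast hn
  apply trm_le_of_key n 2 m (1/4) hm1 (by norm_num) (by omega) (by norm_num)
  have hmR : (m:ℝ) = (n:ℝ)/2 := by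
    have : (n:ℝ) = 2*m := by exact_mod_cast hm
    linarith
  have hsq : (exp 1 * √m)^2 = (exp 1)^2 * ((n:ℝ)/2) := by
    rw [mul_pow, Real.sq_sqrt (by positivity : (0:ℝ) ≤ (m:ℝ)), hmR]
  rw [hsq]
  have key : (24:ℝ) * (exp 1)^2 ≤ (n:ℝ) * (√π * √(2 * n)) := by
    apply le_of_pow_le_pow_left₀ (n := 2) (by norm_num) (by positivity)
    have hrhs : ((n:ℝ) * (√π * √(2 * n)))^2 = (n:ℝ)^2 * (π * (2*n)) := by
      rw [mul_pow, sq_S]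
    rw [hrhs]
    have hn3 : (19:ℝ)^3 ≤ (n:ℝ)^3 := pow_le_pow_left₀ (by norm_num) hnR 3
    nlinarith [pi_ge', e_sq, Real.exp_pos 1, hn3]
  nlinarith [mul_le_mul_of_nonneg_left key (show (0:ℝ) ≤ (n:ℝ)^3/144 by positivity),
    Real.sqrt_nonneg π, Real.sqrt_nonneg (2*(n:ℝ))]

lemma trm3 (n : ℕ) (hn : 19 ≤ n) (h3 : 3 ∣ n) : trm n 3 ≤ 7/50 := by
  obtain ⟨m, hm⟩ := h3
  have hm1 : 1 ≤ m := by omega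
  have hnR : (19:ℝ) ≤ n := by exact_mod_cast hn
  apply trm_le_of_key n 3 m (7/50) hm1 (by norm_num) (by omega) (by norm_num)
  have hmR : (m:ℝ) = (n:ℝ)/3 := by
    have : (n:ℝ) = 3*m := by exact_mod_cast hm
    linarith
  have hsq : (exp 1 * √m)^2 = (exp 1)^2 * ((n:ℝ)/3) := by
    rw [mul_pow, Real.sq_sqrt (by positivity : (0:ℝ) ≤ (m:ℝ)), hmR]
  apply le_mul_S n (by positivity)
  have hL : ((exp 1 * √m) ^ 3 * ((n : ℝ) ^ 2 / 3)) ^ 2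
      = ((exp 1)^2 * ((n:ℝ)/3)) ^ 3 * ((n : ℝ) ^ 2 / 3) ^ 2 := by
    calc ((exp 1 * √m) ^ 3 * ((n : ℝ) ^ 2 / 3)) ^ 2
        = ((exp 1 * √m) ^ 2) ^ 3 * ((n : ℝ) ^ 2 / 3) ^ 2 := by ring
      _ = _ := by rw [hsq]
  rw [hL]
  have he6 : (exp 1)^6 ≤ (7.3890561:ℝ)^3 := by
    calc (exp 1)^6 = ((exp 1)^2)^3 := by ring
      _ ≤ (7.3890561:ℝ)^3 := pow_le_pow_left₀ (by positivity) e_sq 3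
  have hn6 : (19:ℝ)^6 * (n:ℝ)^7 ≤ (n:ℝ)^13 := by
    have : (19:ℝ)^6 ≤ (n:ℝ)^6 := pow_le_pow_left₀ (by norm_num) hnR 6
    nlinarith [pow_nonneg (show (0:ℝ) ≤ (n:ℝ) by positivity) 7]
  nlinarith [he6, pi_ge', hn6, pow_nonneg (show (0:ℝ) ≤ (n:ℝ) by positivity) 7,
    pow_nonneg (show (0:ℝ) ≤ (n:ℝ) by positivity) 13, Real.pi_pos]

lemma trm4 (n : ℕ) (hn : 19 ≤ n) (h4 : 4 ∣ n) : trm n 4 ≤ 3/25 := by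
  obtain ⟨m, hm⟩ := h4
  have hm1 : 1 ≤ m := by omega
  have hnR : (19:ℝ) ≤ n := by exact_mod_cast hn
  apply trm_le_of_key n 4 m (3/25) hm1 (by norm_num) (by omega) (by norm_num)
  have hmR : (m:ℝ) = (n:ℝ)/4 := by
    have : (n:ℝ) = 4*m := by exact_mod_cast hm
    linarith
  have hsq : (exp 1 * √m)^2 = (exp 1)^2 * ((n:ℝ)/4) := by
    rw [mul_pow, Real.sq_sqrt (by positivity : (0:ℝ) ≤ (m:ℝ)), hmR]
  apply le_mul_S n (by positivity)
  have hL : ((exp 1 * √m) ^ 4 * ((n : ℝ) ^ 2 / 3)) ^ 2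
      = ((exp 1)^2 * ((n:ℝ)/4)) ^ 4 * ((n : ℝ) ^ 2 / 3) ^ 2 := by
    calc ((exp 1 * √m) ^ 4 * ((n : ℝ) ^ 2 / 3)) ^ 2
        = ((exp 1 * √m) ^ 2) ^ 4 * ((n : ℝ) ^ 2 / 3) ^ 2 := by ring
      _ = _ := by rw [hsq]
  rw [hL]
  have he8 : (exp 1)^8 ≤ (7.3890561:ℝ)^4 := by
    calc (exp 1)^8 = ((exp 1)^2)^4 := by ring
      _ ≤ (7.3890561:ℝ)^4 := pow_le_pow_left₀ (by positivity) e_sq 4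
  have hn9 : (19:ℝ)^9 * (n:ℝ)^8 ≤ (n:ℝ)^17 := by
    have : (19:ℝ)^9 ≤ (n:ℝ)^9 := pow_le_pow_left₀ (by norm_num) hnR 9
    nlinarith [pow_nonneg (show (0:ℝ) ≤ (n:ℝ) by positivity) 8]
  nlinarith [he8, pi_ge', hn9, pow_nonneg (show (0:ℝ) ≤ (n:ℝ) by positivity) 8,
    pow_nonneg (show (0:ℝ) ≤ (n:ℝ) by positivity) 17, Real.pi_pos]

lemma trm_tail (n d : ℕ) (hn : 19 ≤ n) (hd : 5 ≤ d) (hdvd : d ∣ n) :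
    trm n d ≤ 219 / (100 * n) := by
  have hn0 : 0 < n := by omega
  set m := n / d with hmdef
  have hmd : m * d = n := Nat.div_mul_cancel hdvd
  have hm1 : 1 ≤ m := by
    rw [hmdef]
    exact (Nat.one_le_div_iff (by omega)).mpr (Nat.le_of_dvd hn0 hdvd)
  have hnR : (19:ℝ) ≤ n := by exact_mod_cast hn
  have hnR0 : (0:ℝ) < n := by linarith
  apply trm_le_of_key n d m (219/(100*n)) hm1 (by omega) hmd (by positivity)
  have hqx : 219/(100*(n:ℝ)) * ((n:ℝ)^2/3) = 73/100 * (n:ℝ) := by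
    field_simp
    ring
  rw [hqx]
  have hm5 : (m:ℝ) ≤ (n:ℝ)/5 := by
    have h5 : m * 5 ≤ n := by calc m * 5 ≤ m * d := by exact Nat.mul_le_mul_left m hd
                                _ = n := hmd
    have : (m:ℝ) * 5 ≤ (n:ℝ) := by exact_mod_cast h5
    linarith
  set s : ℝ := exp 1 * √((n:ℝ)/5) with hs
  have hs0 : 0 ≤ s := by positivity
  have h1 : exp 1 * √m ≤ s := by
    apply mul_le_mul_of_nonneg_left (Real.sqrt_le_sqrt hm5) (Real.exp_pos 1).le
  have hssq : s^2 = (exp 1)^2 * ((n:ℝ)/5) := by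
    rw [hs, mul_pow, Real.sq_sqrt (by positivity : (0:ℝ) ≤ (n:ℝ)/5)]
  have h2 : s ≤ 73/100 * (n:ℝ) := by
    apply le_of_pow_le_pow_left₀ (n := 2) (by norm_num) (by positivity)
    rw [hssq]
    nlinarith [e_sq, Real.exp_pos 1]
  have h5 : s ^ 5 * ((n : ℝ) ^ 2 / 3) ≤ (73/100 * (n:ℝ)) ^ 5 * (√π * √(2 * (n:ℝ))) := by
    apply le_mul_S n (by positivity)
    have hL : (s ^ 5 * ((n : ℝ) ^ 2 / 3)) ^ 2
        = ((exp 1)^2 * ((n:ℝ)/5)) ^ 5 * ((n : ℝ) ^ 2 / 3) ^ 2 := by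
      calc (s ^ 5 * ((n : ℝ) ^ 2 / 3)) ^ 2 = (s^2) ^ 5 * ((n : ℝ) ^ 2 / 3) ^ 2 := by ring
        _ = _ := by rw [hssq]
    rw [hL]
    have he10 : (exp 1)^10 ≤ (7.3890561:ℝ)^5 := by
      calc (exp 1)^10 = ((exp 1)^2)^5 := by ring
        _ ≤ (7.3890561:ℝ)^5 := pow_le_pow_left₀ (by positivity) e_sq 5
    nlinarith [he10, pi_ge', hnR, pow_nonneg (show (0:ℝ) ≤ (n:ℝ) by positivity) 9,
      pow_nonneg (show (0:ℝ) ≤ (n:ℝ) by positivity) 11, Real.pi_pos,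
      mul_le_mul_of_nonneg_right (mul_le_mul_of_nonneg_right hnR
        (pow_nonneg (show (0:ℝ) ≤ (n:ℝ) by positivity) 9))
        (show (0:ℝ) ≤ (n:ℝ) by positivity)]
  have hx0 : (0:ℝ) ≤ (n:ℝ)^2/3 := by positivity
  calc (exp 1 * √m) ^ d * ((n : ℝ) ^ 2 / 3) ≤ s ^ d * ((n : ℝ) ^ 2 / 3) := by
        apply mul_le_mul_of_nonneg_right (pow_le_pow_left₀ (by positivity) h1 d) hx0
    _ = s ^ 5 * ((n : ℝ) ^ 2 / 3) * s ^ (d - 5) := by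
        rw [mul_right_comm, ← pow_add]
        congr 2
        omega
    _ ≤ (73/100 * (n:ℝ)) ^ 5 * (√π * √(2 * (n:ℝ))) * (73/100 * (n:ℝ)) ^ (d - 5) := by
        apply mul_le_mul h5 (pow_le_pow_left₀ hs0 h2 _) (by positivity) (by positivity)
    _ = (73/100 * (n:ℝ)) ^ d * (√π * √(2 * (n:ℝ))) := by
        rw [mul_right_comm, ← pow_add]
        congr 3
        omega

lemma card_tail (n : ℕ) (hn : 0 < n) :
    (n.divisors.filter (fun d => 5 ≤ d)).card ≤ n / 5 := by
  have h : (n.divisors.filter (fun d => 5 ≤ d)).card ≤ (Finset.Icc 1 (n/5)).card := by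
    apply Finset.card_le_card_of_injOn (fun d => n / d)
    · intro d hd
      simp only [Finset.mem_coe, Finset.mem_filter, Nat.mem_divisors] at hd
      obtain ⟨⟨hdvd, hne⟩, h5⟩ := hd
      rw [Finset.mem_coe, Finset.mem_Icc]
      constructor
      · exact Nat.one_le_div_iff (by omega) |>.mpr (Nat.le_of_dvd hn hdvd)
      · exact Nat.div_le_div_left h5 (by norm_num)
    · intro d1 h1 d2 h2 heq
      simp only [Finset.coe_filter, Set.mem_setOf_eq, Nat.mem_divisors] at h1 h2
      have e1 : n / (n / d1) = d1 := Nat.div_div_self h1.1.1 hn.ne'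
      have e2 : n / (n / d2) = d2 := Nat.div_div_self h2.1.1 hn.ne'
      simp only at heq
      rw [← e1, ← e2, heq]
  simpa [Nat.card_Icc] using h

theorem big (n : ℕ) (hn : 19 ≤ n) : ∑ d ∈ n.divisors, trm n d ≤ 2 := by
  classical
  have hn0 : 0 < n := by omega
  have h1mem : (1:ℕ) ∈ n.divisors := Nat.one_mem_divisors.mpr hn0.ne'
  rw [← Finset.add_sum_erase _ _ h1mem, trm_one n hn0]
  have hsum : ∑ d ∈ n.divisors.erase 1, trm n d ≤ 1 := by
    set w : ℕ → ℝ := fun d =>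
      if d = 2 then (1/4 : ℝ) else if d = 3 then 7/50 else if d = 4 then 3/25
        else 219 / (100 * n) with hw
    have hw0 : ∀ d, 0 ≤ w d := by
      intro d
      have : (0:ℝ) ≤ 219 / (100 * n) := by positivity
      simp only [hw]
      split_ifs <;> norm_num
      exact this
    have hstep : ∀ d ∈ n.divisors.erase 1, trm n d ≤ w d := by
      intro d hd
      obtain ⟨hne1, hdmem⟩ := Finset.mem_erase.mp hd
      obtain ⟨hdvd, -⟩ := Nat.mem_divisors.mp hdmem
      have hd0 : 0 < d := Nat.pos_of_mem_divisors hdmem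
      simp only [hw]
      by_cases h2 : d = 2
      · subst h2; simpa using trm2 n hn hdvd
      by_cases h3 : d = 3
      · subst h3; simpa using trm3 n hn hdvd
      by_cases h4 : d = 4
      · subst h4; simpa using trm4 n hn hdvd
      have hd5 : 5 ≤ d := by omega
      simp only [if_neg h2, if_neg h3, if_neg h4]
      exact trm_tail n d hn hd5 hdvd
    calc ∑ d ∈ n.divisors.erase 1, trm n d ≤ ∑ d ∈ n.divisors.erase 1, w d :=
          Finset.sum_le_sum hstep
      _ = (∑ d ∈ (n.divisors.erase 1).filter (fun d => d ≤ 4), w d)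
          + ∑ d ∈ (n.divisors.erase 1).filter (fun d => ¬ d ≤ 4), w d :=
          (Finset.sum_filter_add_sum_filter_not _ _ _).symm
      _ ≤ 51/100 + 219/500 := by
          gcongr
          · have hsub : (n.divisors.erase 1).filter (fun d => d ≤ 4) ⊆ ({2,3,4} : Finset ℕ) := by
              intro d hd
              simp only [Finset.mem_filter, Finset.mem_erase] at hd
              have := Nat.pos_of_mem_divisors hd.1.2
              simp only [Finset.mem_insert, Finset.mem_singleton]
              omega
            calc ∑ d ∈ (n.divisors.erase 1).filter (fun d => d ≤ 4), w d
                ≤ ∑ d ∈ ({2,3,4} : Finset ℕ), w d :=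
                  Finset.sum_le_sum_of_subset_of_nonneg hsub (fun i _ _ => hw0 i)
              _ = 51/100 := by simp [hw]; norm_num
          · have hconst : ∀ d ∈ (n.divisors.erase 1).filter (fun d => ¬ d ≤ 4),
                w d = 219 / (100 * n) := by
              intro d hd
              simp only [Finset.mem_filter] at hd
              have h5 := hd.2
              simp only [hw, if_neg (by omega : ¬ d = 2), if_neg (by omega : ¬ d = 3),
                if_neg (by omega : ¬ d = 4)]
            rw [Finset.sum_congr rfl hconst, Finset.sum_const, nsmul_eq_mul]
            have hcard : ((n.divisors.erase 1).filter (fun d => ¬ d ≤ 4)).card ≤ n / 5 := by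
              apply le_trans (Finset.card_le_card ?_) (card_tail n hn0)
              intro d hd
              simp only [Finset.mem_filter, Finset.mem_erase] at hd ⊢
              exact ⟨hd.1.2, by omega⟩
            have hcastR : (((n.divisors.erase 1).filter (fun d => ¬ d ≤ 4)).card : ℝ)
                ≤ (n : ℝ) / 5 := by
              calc (((n.divisors.erase 1).filter (fun d => ¬ d ≤ 4)).card : ℝ)
                  ≤ ((n / 5 : ℕ) : ℝ) := by exact_mod_cast hcard
                _ ≤ (n : ℝ) / 5 := Nat.cast_div_le
            have hnR : (0:ℝ) < n := by exact_mod_cast hn0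
            calc (((n.divisors.erase 1).filter (fun d => ¬ d ≤ 4)).card : ℝ) * (219 / (100 * n))
                ≤ ((n:ℝ)/5) * (219 / (100 * n)) := by
                  apply mul_le_mul_of_nonneg_right hcastR (by positivity)
              _ = 219/500 := by field_simp; ring
      _ ≤ 1 := by norm_num
  linarith

/-- For every integer `n ≥ 9`, `B_n(n²/3) ≤ 2`, where
`B_n(x) = Σ_{d ∣ n} Q(n,d) · x^{1/d − 1}` and `Q(n,d) = (d^n · ((n/d)!)^d / n!)^{1/d}`. -/
theorem B_n_at_n_sq_div_three_le_two (n : ℕ) (hn : 9 ≤ n) :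
    ∑ d ∈ n.divisors,
        ((d : ℝ) ^ n * ((n / d).factorial : ℝ) ^ d / (n.factorial : ℝ)) ^ ((1 : ℝ) / d) *
          ((n : ℝ) ^ 2 / 3) ^ ((1 : ℝ) / d - 1) ≤ 2 := by
  suffices h : ∑ d ∈ n.divisors, trm n d ≤ 2 by
    simpa only [trm] using h
  rcases lt_or_ge n 19 with hlt | hge
  · interval_cases n
    · -- n = 9
      rw [show (9:ℕ).divisors = {1,3,9} from by decide]
      rw [Finset.sum_insert (by decide), Finset.sum_insert (by decide), Finset.sum_singleton]
      have e1 := trm_one 9 (by norm_num)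
      have b3 : trm 9 3 ≤ 26/100 :=
        trm_le 9 3 _ (by norm_num) (by norm_num) (by norm_num) (by norm_num [Nat.factorial])
      have b9 : trm 9 9 ≤ 12/100 :=
        trm_le 9 9 _ (by norm_num) (by norm_num) (by norm_num) (by norm_num [Nat.factorial])
      linarith
    · -- n = 10
      rw [show (10:ℕ).divisors = {1,2,5,10} from by decide]
      rw [Finset.sum_insert (by decide), Finset.sum_insert (by decide),
        Finset.sum_insert (by decide), Finset.sum_singleton]
      have e1 := trm_one 10 (by norm_num)
      have b2 : trm 10 2 ≤ 36/100 :=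
        trm_le 10 2 _ (by norm_num) (by norm_num) (by norm_num) (by norm_num [Nat.factorial])
      have b5 : trm 10 5 ≤ 15/100 :=
        trm_le 10 5 _ (by norm_num) (by norm_num) (by norm_num) (by norm_num [Nat.factorial])
      have b10 : trm 10 10 ≤ 10/100 :=
        trm_le 10 10 _ (by norm_num) (by norm_num) (by norm_num) (by norm_num [Nat.factorial])
      linarith
    · -- n = 11
      rw [show (11:ℕ).divisors = {1,11} from by decide]
      rw [Finset.sum_insert (by decide), Finset.sum_singleton]
      have e1 := trm_one 11 (by norm_num)
      have b11 : trm 11 11 ≤ 8/100 :=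
        trm_le 11 11 _ (by norm_num) (by norm_num) (by norm_num) (by norm_num [Nat.factorial])
      linarith
    · -- n = 12
      rw [show (12:ℕ).divisors = {1,2,3,4,6,12} from by decide]
      rw [Finset.sum_insert (by decide), Finset.sum_insert (by decide),
        Finset.sum_insert (by decide), Finset.sum_insert (by decide),
        Finset.sum_insert (by decide), Finset.sum_singleton]
      have e1 := trm_one 12 (by norm_num)
      have b2 : trm 12 2 ≤ 31/100 :=
        trm_le 12 2 _ (by norm_num) (by norm_num) (by norm_num) (by norm_num [Nat.factorial])
      have b3 : trm 12 3 ≤ 19/100 :=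
        trm_le 12 3 _ (by norm_num) (by norm_num) (by norm_num) (by norm_num [Nat.factorial])
      have b4 : trm 12 4 ≤ 15/100 :=
        trm_le 12 4 _ (by norm_num) (by norm_num) (by norm_num) (by norm_num [Nat.factorial])
      have b6 : trm 12 6 ≤ 11/100 :=
        trm_le 12 6 _ (by norm_num) (by norm_num) (by norm_num) (by norm_num [Nat.factorial])
      have b12 : trm 12 12 ≤ 7/100 :=
        trm_le 12 12 _ (by norm_num) (by norm_num) (by norm_num) (by norm_num [Nat.factorial])
      linarith
    · -- n = 13
      rw [show (13:ℕ).divisors = {1,13} from by decide]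
      rw [Finset.sum_insert (by decide), Finset.sum_singleton]
      have e1 := trm_one 13 (by norm_num)
      have b13 : trm 13 13 ≤ 6/100 :=
        trm_le 13 13 _ (by norm_num) (by norm_num) (by norm_num) (by norm_num [Nat.factorial])
      linarith
    · -- n = 14
      rw [show (14:ℕ).divisors = {1,2,7,14} from by decide]
      rw [Finset.sum_insert (by decide), Finset.sum_insert (by decide),
        Finset.sum_insert (by decide), Finset.sum_singleton]
      have e1 := trm_one 14 (by norm_num)
      have b2 : trm 14 2 ≤ 28/100 :=
        trm_le 14 2 _ (by norm_num) (by norm_num) (by norm_num) (by norm_num [Nat.factorial])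
      have b7 : trm 14 7 ≤ 8/100 :=
        trm_le 14 7 _ (by norm_num) (by norm_num) (by norm_num) (by norm_num [Nat.factorial])
      have b14 : trm 14 14 ≤ 5/100 :=
        trm_le 14 14 _ (by norm_num) (by norm_num) (by norm_num) (by norm_num [Nat.factorial])
      linarith
    · -- n = 15
      rw [show (15:ℕ).divisors = {1,3,5,15} from by decide]
      rw [Finset.sum_insert (by decide), Finset.sum_insert (by decide),
        Finset.sum_insert (by decide), Finset.sum_singleton]
      have e1 := trm_one 15 (by norm_num)
      have b3 : trm 15 3 ≤ 16/100 :=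
        trm_le 15 3 _ (by norm_num) (by norm_num) (by norm_num) (by norm_num [Nat.factorial])
      have b5 : trm 15 5 ≤ 9/100 :=
        trm_le 15 5 _ (by norm_num) (by norm_num) (by norm_num) (by norm_num [Nat.factorial])
      have b15 : trm 15 15 ≤ 5/100 :=
        trm_le 15 15 _ (by norm_num) (by norm_num) (by norm_num) (by norm_num [Nat.factorial])
      linarith
    · -- n = 16
      rw [show (16:ℕ).divisors = {1,2,4,8,16} from by decide]
      rw [Finset.sum_insert (by decide), Finset.sum_insert (by decide),
        Finset.sum_insert (by decide), Finset.sum_insert (by decide), Finset.sum_singleton]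
      have e1 := trm_one 16 (by norm_num)
      have b2 : trm 16 2 ≤ 25/100 :=
        trm_le 16 2 _ (by norm_num) (by norm_num) (by norm_num) (by norm_num [Nat.factorial])
      have b4 : trm 16 4 ≤ 11/100 :=
        trm_le 16 4 _ (by norm_num) (by norm_num) (by norm_num) (by norm_num [Nat.factorial])
      have b8 : trm 16 8 ≤ 6/100 :=
        trm_le 16 8 _ (by norm_num) (by norm_num) (by norm_num) (by norm_num [Nat.factorial])
      have b16 : trm 16 16 ≤ 4/100 :=
        trm_le 16 16 _ (by norm_num) (by norm_num) (by norm_num) (by norm_num [Nat.factorial])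
      linarith
    · -- n = 17
      rw [show (17:ℕ).divisors = {1,17} from by decide]
      rw [Finset.sum_insert (by decide), Finset.sum_singleton]
      have e1 := trm_one 17 (by norm_num)
      have b17 : trm 17 17 ≤ 4/100 :=
        trm_le 17 17 _ (by norm_num) (by norm_num) (by norm_num) (by norm_num [Nat.factorial])
      linarith
    · -- n = 18
      rw [show (18:ℕ).divisors = {1,2,3,6,9,18} from by decide]
      rw [Finset.sum_insert (by decide), Finset.sum_insert (by decide),
        Finset.sum_insert (by decide), Finset.sum_insert (by decide),
        Finset.sum_insert (by decide), Finset.sum_singleton]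
      have e1 := trm_one 18 (by norm_num)
      have b2 : trm 18 2 ≤ 23/100 :=
        trm_le 18 2 _ (by norm_num) (by norm_num) (by norm_num) (by norm_num [Nat.factorial])
      have b3 : trm 18 3 ≤ 13/100 :=
        trm_le 18 3 _ (by norm_num) (by norm_num) (by norm_num) (by norm_num [Nat.factorial])
      have b6 : trm 18 6 ≤ 7/100 :=
        trm_le 18 6 _ (by norm_num) (by norm_num) (by norm_num) (by norm_num [Nat.factorial])
      have b9 : trm 18 9 ≤ 5/100 :=
        trm_le 18 9 _ (by norm_num) (by norm_num) (by norm_num) (by norm_num [Nat.factorial])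
      have b18 : trm 18 18 ≤ 3/100 :=
        trm_le 18 18 _ (by norm_num) (by norm_num) (by norm_num) (by norm_num [Nat.factorial])
      linarith
  · exact big n hge
end
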